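/- arXiv:1110.6473 — 2 statements merged into one kernel-verified Lean document; each statement's English description precedes it below -/
import Mathlib

section
/- If a combinatorial triangulation contains k pairwise edge-disjoint separating triangles, then any sequence of edge flips that transforms it into a 4-connected triangulation has length at least k, since each flip removes only the separating triangles to which the flipped edge belongs. -/
/-- A combinatorial triangulation (maximal planar simple graph with an embedding),
represented by its collection of triangular faces together with a designated outer
face.  Every face is a 3-set of vertices, every edge (2-subset of a face) lies on
exactly two faces, every vertex lies on a face, Euler's relation `F = 2n - 4`
holds, and the faces connect the vertex set. -/
structure Triangulation (V : Type*) [Fintype V] [DecidableEq V] where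
  faces : Finset (Finset V)
  outer : Finset V
  outer_mem : outer ∈ faces
  card_eq : ∀ f ∈ faces, f.card = 3
  two_faces : ∀ e : Finset V, e.card = 2 → (∃ f ∈ faces, e ⊆ f) →
      (faces.filter fun f => e ⊆ f).card = 2
  covers : ∀ v : V, ∃ f ∈ faces, v ∈ f
  euler : faces.card = 2 * Fintype.card V - 4
  face_connected : ∀ A : Finset V, A.Nonempty → A ≠ Finset.univ →
      ∃ f ∈ faces, (∃ a ∈ f, a ∈ A) ∧ ∃ b ∈ f, b ∉ A

namespace Triangulation

variable {V : Type*} [Fintype V] [DecidableEq V]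

/-- The underlying simple graph of a triangulation: two distinct vertices are
adjacent when they lie on a common (triangular) face. -/
def graph (T : Triangulation V) : SimpleGraph V where
  Adj u v := u ≠ v ∧ ∃ f ∈ T.faces, u ∈ f ∧ v ∈ f
  symm := by
    constructor
    rintro u v ⟨huv, f, hf, hu, hv⟩
    exact ⟨huv.symm, f, hf, hv, hu⟩
  loopless := by constructor; rintro v ⟨h, -⟩; exact h rfl

instance (T : Triangulation V) : DecidableRel T.graph.Adj := fun u v =>
  inferInstanceAs (Decidable (u ≠ v ∧ ∃ f ∈ T.faces, u ∈ f ∧ v ∈ f))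

/-- `e` is an edge of the triangulation: a 2-subset of some face. -/
def IsEdge (T : Triangulation V) (e : Finset V) : Prop :=
  e.card = 2 ∧ ∃ f ∈ T.faces, e ⊆ f

/-- A separating triangle: a 3-cycle whose removal splits the remaining vertices
into two non-empty parts with no edge between them. -/
def IsSepTri (T : Triangulation V) (t : Finset V) : Prop :=
  t.card = 3 ∧ (∀ u ∈ t, ∀ v ∈ t, u ≠ v → T.graph.Adj u v) ∧
  ∃ A B : Set V, A.Nonempty ∧ B.Nonempty ∧ A ∪ B = {v : V | v ∉ t} ∧
    A ∩ B = ∅ ∧ ∀ a ∈ A, ∀ b ∈ B, ¬ T.graph.Adj a b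

/-- `v` lies outside the separating triangle `t`: avoiding `t`, it can reach a
vertex of the outer face. -/
def IsOutside (T : Triangulation V) (t : Finset V) (v : V) : Prop :=
  ∃ (hv : v ∉ t) (w : V) (hw : w ∉ t), w ∈ T.outer ∧
    (T.graph.induce {x : V | x ∉ t}).Reachable ⟨v, hv⟩ ⟨w, hw⟩

/-- `v` lies inside the separating triangle `t`. -/
def IsInside (T : Triangulation V) (t : Finset V) (v : V) : Prop :=
  v ∉ t ∧ ¬ T.IsOutside t v

/-- Separating triangle `A` contains separating triangle `B`: the interior of `B`
is contained in the interior of `A`, with strictly smaller vertex set. -/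
def Contains (T : Triangulation V) (A B : Finset V) : Prop :=
  (∀ v, T.IsInside B v → T.IsInside A v) ∧ ∃ v, T.IsInside A v ∧ ¬ T.IsInside B v

/-- A free edge: an edge belonging to no separating triangle. -/
def FreeEdge (T : Triangulation V) (e : Finset V) : Prop :=
  T.IsEdge e ∧ ∀ t, T.IsSepTri t → ¬ e ⊆ t

/-- An edge is inside a separating triangle if at least one endpoint is inside. -/
def EdgeInsideOf (T : Triangulation V) (t e : Finset V) : Prop :=
  ∃ v ∈ e, T.IsInside t v

/-- A triangulation is 4-connected iff it has no separating triangle. -/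
def FourConnected (T : Triangulation V) : Prop := ∀ t, ¬ T.IsSepTri t

/-- The data of an edge flip: the edge `{a,b}`, lying on faces `{a,b,c}` and
`{a,b,d}`, is replaced by the edge `{c,d}` (allowed only if `{c,d}` is not
already an edge); the outer face is kept, unless it was one of the two modified
faces, in which case one of the two new faces is the new outer face. -/
def FlipData (T T' : Triangulation V) (a b c d : V) : Prop :=
  ({a, b, c} : Finset V) ∈ T.faces ∧ ({a, b, d} : Finset V) ∈ T.faces ∧
  c ≠ d ∧ ¬ T.graph.Adj c d ∧
  T'.faces = insert {a, c, d} (insert {b, c, d}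
      (T.faces \ {({a, b, c} : Finset V), ({a, b, d} : Finset V)})) ∧
  (T.outer ≠ {a, b, c} ∧ T.outer ≠ {a, b, d} → T'.outer = T.outer) ∧
  (T.outer = {a, b, c} ∨ T.outer = {a, b, d} →
      T'.outer = ({a, c, d} : Finset V) ∨ T'.outer = ({b, c, d} : Finset V))

/-- `T'` is obtained from `T` by a single edge flip. -/
def IsFlip (T T' : Triangulation V) : Prop := ∃ a b c d, FlipData T T' a b c d

/-- `T'` is obtained from `T` by flipping the edge `e`. -/
def FlipsEdge (T T' : Triangulation V) (e : Finset V) : Prop :=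
  ∃ a b c d, e = {a, b} ∧ FlipData T T' a b c d

/-- `T'` is obtained from `T` by a flip that creates the new edge `e`. -/
def FlipCreates (T T' : Triangulation V) (e : Finset V) : Prop :=
  ∃ a b c d, e = {c, d} ∧ FlipData T T' a b c d

/-- `FlipSeq k T T'` : `T'` is obtained from `T` by a sequence of `k` flips. -/
def FlipSeq : ℕ → Triangulation V → Triangulation V → Prop
  | 0, T, T' => T' = T
  | n + 1, T, T' => ∃ T'', IsFlip T T'' ∧ FlipSeq n T'' T'

/-- The canonical triangulation: one having two (distinct) dominant vertices. -/
def IsCanonical (T : Triangulation V) : Prop :=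
  ∃ x y : V, x ≠ y ∧ (∀ v, v ≠ x → T.graph.Adj x v) ∧ ∀ v, v ≠ y → T.graph.Adj y v

/-- Isomorphism of triangulations: a vertex bijection carrying faces to faces. -/
def Iso (T1 T2 : Triangulation V) : Prop :=
  ∃ e : V ≃ V, ∀ f : Finset V, f ∈ T1.faces ↔ f.image ⇑e ∈ T2.faces

end Triangulation

lemma card3_ne {V : Type*} [DecidableEq V] {a b c : V}
    (h : ({a, b, c} : Finset V).card = 3) : a ≠ b ∧ a ≠ c ∧ b ≠ c := by
  refine ⟨?_, ?_, ?_⟩ <;> rintro rfl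
  · have hsub : ({a, a, c} : Finset V) ⊆ insert a {c} := by
      intro x hx; simp at hx ⊢; tauto
    have h1 := (Finset.card_le_card hsub).trans (Finset.card_insert_le _ _)
    simp only [Finset.card_singleton] at h1; omega
  · have hsub : ({a, b, a} : Finset V) ⊆ insert a {b} := by
      intro x hx; simp at hx ⊢; tauto
    have h1 := (Finset.card_le_card hsub).trans (Finset.card_insert_le _ _)
    simp only [Finset.card_singleton] at h1; omega
  · have hsub : ({a, b, b} : Finset V) ⊆ insert a {b} := by
      intro x hx; simp at hx ⊢; tauto
    have h1 := (Finset.card_le_card hsub).trans (Finset.card_insert_le _ _)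
    simp only [Finset.card_singleton] at h1; omega

lemma mem3 {V : Type*} [DecidableEq V] {x a b c : V}
    (h : x ∈ ({a, b, c} : Finset V)) : a = x ∨ b = x ∨ c = x := by
  rcases Finset.mem_insert.mp h with rfl | h
  · exact Or.inl rfl
  rcases Finset.mem_insert.mp h with rfl | h
  · exact Or.inr (Or.inl rfl)
  · exact Or.inr (Or.inr (Finset.mem_singleton.mp h).symm)

lemma sep_preserved {V : Type*} [Fintype V] [DecidableEq V]
    {T T' : Triangulation V} {a b c d : V}
    (h : Triangulation.FlipData T T' a b c d) {t : Finset V}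
    (ht : T.IsSepTri t) (hab : ¬ ({a, b} : Finset V) ⊆ t) :
    T'.IsSepTri t := by
  obtain ⟨habc, habd, hcd, hncd, hfaces, -, -⟩ := h
  obtain ⟨ht3, htri, A, B, hA, hB, hAB, hABdisj, hsep⟩ := ht
  obtain ⟨hne_ab, hne_ac, hne_bc⟩ := card3_ne (T.card_eq _ habc)
  obtain ⟨-, hne_ad, hne_bd⟩ := card3_ne (T.card_eq _ habd)
  have hmem : ∀ f, f ∈ T'.faces ↔ f = {a, c, d} ∨ f = {b, c, d} ∨
      (f ∈ T.faces ∧ f ≠ ({a, b, c} : Finset V) ∧ f ≠ ({a, b, d} : Finset V)) := by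
    intro f
    rw [hfaces]
    simp only [Finset.mem_insert, Finset.mem_sdiff, Finset.mem_singleton, not_or]
  have hadj_ac : T.graph.Adj a c := ⟨hne_ac, {a, b, c}, habc, by simp, by simp⟩
  have hadj_bc : T.graph.Adj b c := ⟨hne_bc, {a, b, c}, habc, by simp, by simp⟩
  have hadj_ad : T.graph.Adj a d := ⟨hne_ad, {a, b, d}, habd, by simp, by simp⟩
  have hadj_bd : T.graph.Adj b d := ⟨hne_bd, {a, b, d}, habd, by simp, by simp⟩
  have hkey : ∀ (_ : c ∈ A) (_ : d ∈ B), False := by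
    intro hc hd
    have hat : a ∈ t := by
      by_contra hat
      have hm : a ∈ A ∪ B := by rw [hAB]; exact hat
      rcases (Set.mem_union _ _ _).mp hm with ha | ha
      · exact hsep a ha d hd hadj_ad
      · exact hsep c hc a ha hadj_ac.symm
    have hbt : b ∈ t := by
      by_contra hbt
      have hm : b ∈ A ∪ B := by rw [hAB]; exact hbt
      rcases (Set.mem_union _ _ _).mp hm with hb | hb
      · exact hsep b hb d hd hadj_bd
      · exact hsep c hc b hb hadj_bc.symm
    exact hab (Finset.insert_subset_iff.mpr ⟨hat, Finset.singleton_subset_iff.mpr hbt⟩)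
  have hkey' : ∀ (_ : c ∈ B) (_ : d ∈ A), False := by
    intro hc hd
    have hat : a ∈ t := by
      by_contra hat
      have hm : a ∈ A ∪ B := by rw [hAB]; exact hat
      rcases (Set.mem_union _ _ _).mp hm with ha | ha
      · exact hsep a ha c hc hadj_ac
      · exact hsep d hd a ha hadj_ad.symm
    have hbt : b ∈ t := by
      by_contra hbt
      have hm : b ∈ A ∪ B := by rw [hAB]; exact hbt
      rcases (Set.mem_union _ _ _).mp hm with hb | hb
      · exact hsep b hb c hc hadj_bc
      · exact hsep d hd b hb hadj_bd.symm
    exact hab (Finset.insert_subset_iff.mpr ⟨hat, Finset.singleton_subset_iff.mpr hbt⟩)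
  refine ⟨ht3, ?_, A, B, hA, hB, hAB, hABdisj, ?_⟩
  · intro u hu v hv huv
    obtain ⟨-, f, hf, huf, hvf⟩ := htri u hu v hv huv
    by_cases hfc : f = ({a, b, c} : Finset V)
    · subst hfc
      have hu' : a = u ∨ b = u ∨ c = u := mem3 huf
      have hv' : a = v ∨ b = v ∨ c = v := mem3 hvf
      rcases hu' with rfl | rfl | rfl <;> rcases hv' with rfl | rfl | rfl <;>
        first
        | exact absurd rfl huv
        | exact absurd (Finset.insert_subset_iff.mpr
            ⟨‹a ∈ t›, Finset.singleton_subset_iff.mpr ‹b ∈ t›⟩) hab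
        | (refine ⟨huv, ({a, c, d} : Finset V), (hmem _).mpr (Or.inl rfl), ?_, ?_⟩ <;> (simp; done))
        | (refine ⟨huv, ({b, c, d} : Finset V), (hmem _).mpr (Or.inr (Or.inl rfl)), ?_, ?_⟩ <;> (simp; done))
    · by_cases hfd2 : f = ({a, b, d} : Finset V)
      · subst hfd2
        have hu' : a = u ∨ b = u ∨ d = u := mem3 huf
        have hv' : a = v ∨ b = v ∨ d = v := mem3 hvf
        rcases hu' with rfl | rfl | rfl <;> rcases hv' with rfl | rfl | rfl <;>
          first
          | exact absurd rfl huv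
          | exact absurd (Finset.insert_subset_iff.mpr
              ⟨‹a ∈ t›, Finset.singleton_subset_iff.mpr ‹b ∈ t›⟩) hab
          | (refine ⟨huv, ({a, c, d} : Finset V), (hmem _).mpr (Or.inl rfl), ?_, ?_⟩ <;> (simp; done))
          | (refine ⟨huv, ({b, c, d} : Finset V), (hmem _).mpr (Or.inr (Or.inl rfl)), ?_, ?_⟩ <;> (simp; done))
      · exact ⟨huv, f, (hmem f).mpr (Or.inr (Or.inr ⟨hf, hfc, hfd2⟩)), huf, hvf⟩
  · intro x hx y hy hadj
    obtain ⟨hxy, f, hf, hxf, hyf⟩ := hadj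
    rcases (hmem f).mp hf with rfl | rfl | ⟨hfT, -, -⟩
    · have hx' : a = x ∨ c = x ∨ d = x := mem3 hxf
      have hy' : a = y ∨ c = y ∨ d = y := mem3 hyf
      rcases hx' with rfl | rfl | rfl <;> rcases hy' with rfl | rfl | rfl
      · exact hxy rfl
      · exact hsep _ hx _ hy hadj_ac
      · exact hsep _ hx _ hy hadj_ad
      · exact hsep _ hx _ hy hadj_ac.symm
      · exact hxy rfl
      · exact hkey hx hy
      · exact hsep _ hx _ hy hadj_ad.symm
      · exact hkey' hy hx
      · exact hxy rfl
    · have hx' : b = x ∨ c = x ∨ d = x := mem3 hxf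
      have hy' : b = y ∨ c = y ∨ d = y := mem3 hyf
      rcases hx' with rfl | rfl | rfl <;> rcases hy' with rfl | rfl | rfl
      · exact hxy rfl
      · exact hsep _ hx _ hy hadj_bc
      · exact hsep _ hx _ hy hadj_bd
      · exact hsep _ hx _ hy hadj_bc.symm
      · exact hxy rfl
      · exact hkey hx hy
      · exact hsep _ hx _ hy hadj_bd.symm
      · exact hkey' hy hx
      · exact hxy rfl
    · exact hsep x hx y hy ⟨hxy, f, hfT, hxf, hyf⟩

/-- If a triangulation contains `k` pairwise edge-disjoint separating
triangles, then any sequence of edge flips transforming it into a 4-connected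
triangulation has length at least `k`. -/
theorem edge_disjoint_sepTris_lower_bound
    {V : Type*} [Fintype V] [DecidableEq V] (T : Triangulation V)
    (S : Finset (Finset V)) (hS : ∀ t ∈ S, T.IsSepTri t)
    (hdisj : ∀ t1 ∈ S, ∀ t2 ∈ S, t1 ≠ t2 →
      ∀ e : Finset V, e.card = 2 → e ⊆ t1 → ¬ e ⊆ t2)
    (k : ℕ) (T' : Triangulation V) (hseq : Triangulation.FlipSeq k T T')
    (h4 : T'.FourConnected) :
    S.card ≤ k := by
  induction k generalizing T S with
  | zero =>
    simp only [Triangulation.FlipSeq] at hseq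
    subst hseq
    by_contra h
    have hne : S.Nonempty := by
      rw [Finset.nonempty_iff_ne_empty]
      intro he; simp [he] at h
    obtain ⟨t, htS⟩ := hne
    exact h4 t (hS t htS)
  | succ n ih =>
    simp only [Triangulation.FlipSeq] at hseq
    obtain ⟨T'', ⟨a, b, c, d, hfd⟩, hseq'⟩ := hseq
    have hne_ab : a ≠ b := (card3_ne (T.card_eq _ hfd.1)).1
    classical
    set S' := S.filter (fun t => ¬ ({a, b} : Finset V) ⊆ t) with hS'def
    have hsub : S' ⊆ S := Finset.filter_subset _ _
    have h1 : ∀ t ∈ S', T''.IsSepTri t := by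
      intro t ht
      obtain ⟨htS, hnab⟩ := Finset.mem_filter.mp ht
      exact sep_preserved hfd (hS t htS) hnab
    have h2 := ih T'' S' h1
      (fun t1 ht1 t2 ht2 => hdisj t1 (hsub ht1) t2 (hsub ht2)) hseq'
    have hone : (S.filter (fun t => ({a, b} : Finset V) ⊆ t)).card ≤ 1 := by
      apply Finset.card_le_one.mpr
      intro t1 hm1 t2 hm2
      obtain ⟨ht1, he1⟩ := Finset.mem_filter.mp hm1
      obtain ⟨ht2, he2⟩ := Finset.mem_filter.mp hm2
      by_contra hne
      have hcard : ({a, b} : Finset V).card = 2 := by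
        rw [Finset.card_insert_of_notMem (by simp [hne_ab]), Finset.card_singleton]
      exact hdisj t1 ht1 t2 ht2 hne {a, b} hcard he1 he2
    have hsplit := Finset.card_filter_add_card_filter_not
      (s := S) (p := fun t => ({a, b} : Finset V) ⊆ t)
    have hS'card : S'.card ≤ n := h2
    rw [hS'def] at hS'card
    omega
end

section
/- In a 4-connected combinatorial triangulation on n ≥ 13 vertices, every vertex of degree at least 6 either has a neighbour of degree at least 6, or there is a single edge flip after which it is adjacent to a vertex that had degree at least 5 before the flip. -/
namespace Triangulation

variable {V : Type*} [Fintype V] [DecidableEq V]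

set_option linter.unusedSectionVars false
set_option linter.dupNamespace false

variable (T : Triangulation V)

/-! ### Permutation helpers for 3-element finsets -/

lemma tperm {a b c : V} : ({a,b,c} : Finset V) = {b,a,c} := by
  ext x; simp only [Finset.mem_insert, Finset.mem_singleton]; tauto
lemma tperm' {a b c : V} : ({a,b,c} : Finset V) = {a,c,b} := by
  ext x; simp only [Finset.mem_insert, Finset.mem_singleton]; tauto
lemma tperm'' {a b c : V} : ({a,b,c} : Finset V) = {c,a,b} := by
  ext x; simp only [Finset.mem_insert, Finset.mem_singleton]; tauto

lemma card_pair' {a b : V} (h : a ≠ b) : ({a,b} : Finset V).card = 2 := by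
  rw [Finset.card_insert_of_notMem (by simp [h]), Finset.card_singleton]

lemma card_three {a b c : V} (hab : a ≠ b) (hac : a ≠ c) (hbc : b ≠ c) :
    ({a,b,c} : Finset V).card = 3 := by
  rw [Finset.card_insert_of_notMem (by simp [hab, hac]), card_pair' hbc]

/-! ### Faces -/

lemma tri_ne {a b c : V} (h : ({a,b,c} : Finset V) ∈ T.faces) :
    a ≠ b ∧ a ≠ c ∧ b ≠ c := by
  have h3 := T.card_eq _ h
  refine ⟨?_, ?_, ?_⟩ <;> rintro rfl
  · have he : ({a,a,c} : Finset V) = {a,c} := by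
      ext x; simp only [Finset.mem_insert, Finset.mem_singleton]; tauto
    rw [he] at h3
    have := Finset.card_insert_le a ({c} : Finset V)
    simp only [Finset.card_singleton] at this; omega
  · have he : ({a,b,a} : Finset V) = {a,b} := by
      ext x; simp only [Finset.mem_insert, Finset.mem_singleton]; tauto
    rw [he] at h3
    have := Finset.card_insert_le a ({b} : Finset V)
    simp only [Finset.card_singleton] at this; omega
  · have he : ({a,b,b} : Finset V) = {a,b} := by
      ext x; simp only [Finset.mem_insert, Finset.mem_singleton]; tauto
    rw [he] at h3
    have := Finset.card_insert_le a ({b} : Finset V)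
    simp only [Finset.card_singleton] at this; omega

lemma face_adj {a b c : V} (h : ({a,b,c} : Finset V) ∈ T.faces) :
    T.graph.Adj a b :=
  ⟨(T.tri_ne h).1, _, h, by simp, by simp⟩

lemma face_adj' {a b c : V} (h : ({a,b,c} : Finset V) ∈ T.faces) :
    T.graph.Adj a c :=
  ⟨(T.tri_ne h).2.1, _, h, by simp, by simp⟩

lemma face_adj'' {a b c : V} (h : ({a,b,c} : Finset V) ∈ T.faces) :
    T.graph.Adj b c :=
  ⟨(T.tri_ne h).2.2, _, h, by simp, by simp⟩

lemma face_decomp {f : Finset V} (hf : f ∈ T.faces) {x y : V}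
    (hx : x ∈ f) (hy : y ∈ f) (hxy : x ≠ y) :
    ∃ z, z ≠ x ∧ z ≠ y ∧ f = {x,y,z} := by
  have h3 := T.card_eq _ hf
  have hsub : ({x,y} : Finset V) ⊆ f := by
    intro t ht; simp at ht; rcases ht with rfl | rfl <;> assumption
  have hcard : (f \ {x,y}).card = 1 := by
    rw [Finset.card_sdiff_of_subset hsub, h3, card_pair' hxy]
  obtain ⟨z, hz⟩ := Finset.card_eq_one.mp hcard
  have hzmem : z ∈ f \ ({x,y} : Finset V) := by rw [hz]; simp
  simp only [Finset.mem_sdiff, Finset.mem_insert, Finset.mem_singleton] at hzmem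
  push_neg at hzmem
  refine ⟨z, hzmem.2.1, hzmem.2.2, ?_⟩
  apply Finset.Subset.antisymm
  · intro t ht
    by_cases htxy : t = x ∨ t = y
    · simp [htxy]
      tauto
    · push_neg at htxy
      have hmem : t ∈ f \ ({x,y} : Finset V) := by simp [ht, htxy]
      rw [hz] at hmem; simp at hmem; simp [hmem]
  · intro t ht
    simp at ht
    rcases ht with rfl | rfl | rfl
    · exact hx
    · exact hy
    · exact hzmem.1

lemma adj_face {x y : V} (h : T.graph.Adj x y) :
    ∃ z, z ≠ x ∧ z ≠ y ∧ ({x,y,z} : Finset V) ∈ T.faces := by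
  obtain ⟨hne, f, hf, hx, hy⟩ := h
  obtain ⟨z, hz⟩ := T.face_decomp hf hx hy hne
  exact ⟨z, hz.1, hz.2.1, hz.2.2 ▸ hf⟩

lemma face_card_ne_x {x y t : V} (hxy : x ≠ y) (ht : ({x,y,t} : Finset V) ∈ T.faces) :
    t ≠ x ∧ t ≠ y := by
  obtain ⟨_, hxt, hyt⟩ := T.tri_ne ht
  exact ⟨hxt.symm, hyt.symm⟩

/-- The two faces on an edge: given one face `{x,y,z}` on edge `{x,y}`, there is
exactly one other, `{x,y,z'}`. -/
lemma edge_faces {x y z : V} (hz : ({x,y,z} : Finset V) ∈ T.faces) :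
    ∃ z', z' ≠ z ∧ z' ≠ x ∧ z' ≠ y ∧ ({x,y,z'} : Finset V) ∈ T.faces ∧
      ∀ t, ({x,y,t} : Finset V) ∈ T.faces → t = z ∨ t = z' := by
  obtain ⟨hxy, hxz, hyz⟩ := T.tri_ne hz
  have hsubgen : ∀ t : V, ({x,y} : Finset V) ⊆ {x,y,t} := by
    intro t s hs; simp at hs; rcases hs with rfl|rfl <;> simp
  have h2 := T.two_faces {x,y} (card_pair' hxy) ⟨_, hz, hsubgen z⟩
  obtain ⟨f₁, f₂, hf12, hff⟩ := Finset.card_eq_two.mp h2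
  have hmem_iff : ∀ t : V, ({x,y,t} : Finset V) ∈ T.faces →
      ({x,y,t} : Finset V) = f₁ ∨ ({x,y,t} : Finset V) = f₂ := by
    intro t ht
    have hmem : ({x,y,t} : Finset V) ∈ T.faces.filter (fun f => {x,y} ⊆ f) := by
      simp only [Finset.mem_filter]; exact ⟨ht, hsubgen t⟩
    rw [hff] at hmem; simpa using hmem
  have hinj : ∀ t t' : V, t ≠ x → t ≠ y → ({x,y,t} : Finset V) = {x,y,t'} → t = t' := by
    intro t t' htx hty heq
    have : t ∈ ({x,y,t'} : Finset V) := by rw [← heq]; simp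
    simp at this; tauto
  have hdec : ∀ g ∈ T.faces.filter (fun f => ({x,y} : Finset V) ⊆ f),
      ∃ u, u ≠ x ∧ u ≠ y ∧ g = {x,y,u} := by
    intro g hg
    simp only [Finset.mem_filter] at hg
    obtain ⟨u, hu⟩ := T.face_decomp hg.1 (hg.2 (by simp)) (hg.2 (by simp)) hxy
    exact ⟨u, hu⟩
  have key : ∀ g g' : Finset V, ({g, g'} : Finset (Finset V)) = {f₁, f₂} → g ≠ g' →
      ({x,y,z} : Finset V) = g →
      ∃ z', z' ≠ z ∧ z' ≠ x ∧ z' ≠ y ∧ ({x,y,z'} : Finset V) ∈ T.faces ∧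
        ∀ t, ({x,y,t} : Finset V) ∈ T.faces → t = z ∨ t = z' := by
    intro g g' hgg hne hzg
    have hg'mem : g' ∈ T.faces.filter (fun f => ({x,y} : Finset V) ⊆ f) := by
      rw [hff, ← hgg]; simp
    obtain ⟨u, hux, huy, hu⟩ := hdec g' hg'mem
    refine ⟨u, ?_, hux, huy, by rw [← hu]; exact (Finset.mem_filter.mp hg'mem).1, ?_⟩
    · rintro rfl
      exact hne (hzg.symm.trans hu.symm)
    · intro t ht
      have h1 := hmem_iff t ht
      obtain ⟨htx, hty⟩ := T.face_card_ne_x hxy ht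
      have h2' : ({x,y,t} : Finset V) = g ∨ ({x,y,t} : Finset V) = g' := by
        have : ({x,y,t} : Finset V) ∈ ({f₁, f₂} : Finset (Finset V)) := by
          rcases h1 with h|h <;> simp [h]
        rw [← hgg] at this; simpa using this
      rcases h2' with h | h
      · left; exact hinj t z htx hty (h.trans hzg.symm)
      · right; exact hinj t u htx hty (h.trans hu)
  have hzmem : ({x,y,z} : Finset V) = f₁ ∨ ({x,y,z} : Finset V) = f₂ := hmem_iff z hz
  rcases hzmem with h | h
  · exact key f₁ f₂ rfl hf12 h
  · exact key f₂ f₁ (by rw [Finset.pair_comm]) hf12.symm h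


lemma exists_extra {s t : Finset V} (h : s ⊆ t) (hc : s.card < t.card) :
    ∃ z ∈ t, z ∉ s := by
  have hne : (t \ s).Nonempty := by
    rw [← Finset.card_pos, Finset.card_sdiff_of_subset h]
    omega
  obtain ⟨z, hz⟩ := hne
  simp only [Finset.mem_sdiff] at hz
  exact ⟨z, hz.1, hz.2⟩

lemma mem_nbr {x y : V} : y ∈ T.graph.neighborFinset x ↔ T.graph.Adj x y :=
  SimpleGraph.mem_neighborFinset _ _ _

lemma deg_card {x : V} : T.graph.degree x = (T.graph.neighborFinset x).card :=
  (SimpleGraph.card_neighborFinset_eq_degree _ _).symm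

lemma nbr_eq_of_card {x : V} {s : Finset V} (hs : s ⊆ T.graph.neighborFinset x)
    (hc : T.graph.degree x ≤ s.card) : T.graph.neighborFinset x = s :=
  (Finset.eq_of_subset_of_card_le hs (by rw [← T.deg_card]; exact hc)).symm

/-- abbreviation: membership of face gives adjacency to the vertex -/
lemma face_nbr {x p q : V} (h : ({x,p,q} : Finset V) ∈ T.faces) :
    p ∈ T.graph.neighborFinset x ∧ q ∈ T.graph.neighborFinset x := by
  rw [T.mem_nbr, T.mem_nbr]
  exact ⟨T.face_adj h, T.face_adj' h⟩

/-- From a 3-set of mutually adjacent vertices and a closed "inside" finset,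
produce a separating triangle, contradicting 4-connectivity. -/
lemma sep_contra (hn : 13 ≤ Fintype.card V) (h4 : T.FourConnected)
    {x1 x2 x3 : V} (h12 : T.graph.Adj x1 x2) (h13 : T.graph.Adj x1 x3)
    (h23 : T.graph.Adj x2 x3) (A : Finset V) (hA : A.Nonempty)
    (hdisj : ∀ a ∈ A, a ≠ x1 ∧ a ≠ x2 ∧ a ≠ x3)
    (hclosed : ∀ a ∈ A, ∀ y, T.graph.Adj a y → y ∈ A ∨ y = x1 ∨ y = x2 ∨ y = x3)
    (hsmall : A.card + 3 < 13) : False := by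
  apply h4 ({x1,x2,x3} : Finset V)
  have hne12 : x1 ≠ x2 := h12.ne
  have hne13 : x1 ≠ x3 := h13.ne
  have hne23 : x2 ≠ x3 := h23.ne
  refine ⟨card_three hne12 hne13 hne23, ?_, ?_⟩
  · intro u hu v hv huv
    simp only [Finset.mem_insert, Finset.mem_singleton] at hu hv
    rcases hu with rfl|rfl|rfl <;> rcases hv with rfl|rfl|rfl <;>
      first
        | exact absurd rfl huv
        | assumption
        | exact h12.symm
        | exact h13.symm
        | exact h23.symm
  · refine ⟨(↑A : Set V), {y : V | y ∉ ({x1,x2,x3} : Finset V) ∧ y ∉ A}, ?_, ?_, ?_, ?_, ?_⟩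
    · obtain ⟨a, ha⟩ := hA; exact ⟨a, by simpa using ha⟩
    · -- B nonempty : |A ∪ {x1,x2,x3}| < |V|
      have hsub : (A ∪ {x1,x2,x3} : Finset V).card < Fintype.card V := by
        calc (A ∪ {x1,x2,x3} : Finset V).card ≤ A.card + 3 := by
              refine le_trans (Finset.card_union_le _ _) ?_
              have := Finset.card_insert_le x1 ({x2,x3} : Finset V)
              have := Finset.card_insert_le x2 ({x3} : Finset V)
              simp only [Finset.card_singleton] at *
              omega
          _ < 13 := hsmall
          _ ≤ Fintype.card V := hn
      have hex : ∃ y, y ∉ (A ∪ {x1,x2,x3} : Finset V) := by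
        by_contra hc
        push_neg at hc
        have hsub2 : (Finset.univ : Finset V) ⊆ (A ∪ {x1,x2,x3} : Finset V) := fun x _ => hc x
        have := Finset.card_le_card hsub2
        rw [Finset.card_univ] at this
        omega
      obtain ⟨y, hy⟩ := hex
      exact ⟨y, by simpa using fun h => hy (Finset.mem_union_right _ h),
        fun h => hy (Finset.mem_union_left _ h)⟩
    · ext y
      simp only [Set.mem_union, Set.mem_setOf_eq, Finset.coe_insert, Set.mem_insert_iff,
        Finset.mem_coe, Finset.mem_insert, Finset.mem_singleton]
      constructor
      · rintro (hy | ⟨hy, -⟩)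
        · intro hc
          rcases hc with rfl|rfl|rfl
          · exact ((hdisj y hy).1 rfl)
          · exact ((hdisj y hy).2.1 rfl)
          · exact ((hdisj y hy).2.2 rfl)
        · simpa using hy
      · intro hy
        by_cases hmem : y ∈ A
        · exact Or.inl hmem
        · exact Or.inr ⟨by simpa using hy, hmem⟩
    · ext y
      simp only [Set.mem_inter_iff, Finset.mem_coe, Set.mem_setOf_eq, Set.mem_empty_iff_false,
        iff_false, not_and]
      intro hy
      simp [hy]
    · intro p hp b hb hadj
      rcases hclosed p (by simpa using hp) b hadj with h | h | h | h
      · exact hb.2 h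
      · exact hb.1 (by simp [h])
      · exact hb.1 (by simp [h])
      · exact hb.1 (by simp [h])


lemma min_degree (hn : 13 ≤ Fintype.card V) (h4 : T.FourConnected) (x : V) :
    4 ≤ T.graph.degree x := by
  obtain ⟨f, hf, hxf⟩ := T.covers x
  have h3 : f.card = 3 := T.card_eq _ hf
  obtain ⟨s, hsf, hsx⟩ := Finset.exists_mem_ne (by rw [h3]; norm_num) x
  obtain ⟨t, hts, htx, hft⟩ := T.face_decomp hf hxf hsf (Ne.symm hsx)
  -- f = {x, s, t}
  have hfx : ({x,s,t} : Finset V) ∈ T.faces := hft ▸ hf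
  obtain ⟨r, hrt, hrx, hrs, hfr, hex_xs⟩ := T.edge_faces hfx
  have hAs : T.graph.Adj x s := T.face_adj hfx
  have hAt : T.graph.Adj x t := T.face_adj' hfx
  have hAr : T.graph.Adj x r := T.face_adj' hfr
  have hsub : ({s,t,r} : Finset V) ⊆ T.graph.neighborFinset x := by
    intro e he
    simp only [Finset.mem_insert, Finset.mem_singleton] at he
    rw [T.mem_nbr]
    rcases he with rfl|rfl|rfl
    · exact hAs
    · exact hAt
    · exact hAr
  have hst : s ≠ t := (T.tri_ne hfx).2.2
  have hcard3 : ({s,t,r} : Finset V).card = 3 := card_three hst (Ne.symm hrs) (Ne.symm hrt)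
  have hdge3 : 3 ≤ T.graph.degree x := by
    rw [T.deg_card, ← hcard3]
    exact Finset.card_le_card hsub
  by_cases hdeg : T.graph.degree x = 3
  · -- N(x) = {s,t,r}; get the third face {x,t,r} and a separating triangle
    exfalso
    have hN : T.graph.neighborFinset x = {s,t,r} :=
      T.nbr_eq_of_card hsub (by rw [hdeg, hcard3])
    have hfxts : ({x,t,s} : Finset V) ∈ T.faces := by
      rw [tperm']; exact hfx
    obtain ⟨r', hr's, hr'x, hr't, hfr', _⟩ := T.edge_faces hfxts
    have hr'N : r' ∈ T.graph.neighborFinset x := by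
      rw [T.mem_nbr]; exact T.face_adj' hfr'
    rw [hN] at hr'N
    simp only [Finset.mem_insert, Finset.mem_singleton] at hr'N
    have hr'r : r' = r := by
      rcases hr'N with h|h|h
      · exact absurd h hr's
      · exact absurd h hr't
      · exact h
    rw [hr'r] at hfr'
    -- faces {x,s,t},{x,s,r},{x,t,r}: triangle {s,t,r} separates {x}
    have hadj_st : T.graph.Adj s t := T.face_adj'' hfx
    have hadj_sr : T.graph.Adj s r := T.face_adj'' hfr
    have hadj_tr : T.graph.Adj t r := T.face_adj'' hfr'
    refine T.sep_contra hn h4 hadj_st hadj_sr hadj_tr {x} ⟨x, by simp⟩ ?_ ?_ (by simp)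
    · intro a ha
      simp only [Finset.mem_singleton] at ha
      subst ha
      exact ⟨Ne.symm hsx, Ne.symm hts, Ne.symm hrx⟩
    · intro a ha y hy
      simp only [Finset.mem_singleton] at ha
      subst ha
      have : y ∈ T.graph.neighborFinset a := by rw [T.mem_nbr]; exact hy
      rw [hN] at this
      simp only [Finset.mem_insert, Finset.mem_singleton] at this
      tauto
  · omega

lemma nbr_of_face {u p t : V} (h : ({u,p,t} : Finset V) ∈ T.faces) :
    t ∈ T.graph.neighborFinset u := by
  rw [T.mem_nbr]; exact T.face_adj' h

/-- Link structure of a degree-4 vertex. -/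
lemma link4 {u x p q : V} (hdeg : T.graph.degree u = 4)
    (h1 : ({u,x,p} : Finset V) ∈ T.faces) (h2 : ({u,x,q} : Finset V) ∈ T.faces)
    (hpq : p ≠ q) :
    ∃ y, y ≠ u ∧ y ≠ x ∧ y ≠ p ∧ y ≠ q ∧
      T.graph.neighborFinset u = {x,p,q,y} ∧
      ({u,p,y} : Finset V) ∈ T.faces ∧ ({u,q,y} : Finset V) ∈ T.faces ∧
      (∀ t, ({u,x,t} : Finset V) ∈ T.faces → t = p ∨ t = q) ∧
      (∀ t, ({u,p,t} : Finset V) ∈ T.faces → t = x ∨ t = y) ∧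
      (∀ t, ({u,q,t} : Finset V) ∈ T.faces → t = x ∨ t = y) := by
  obtain ⟨hux, hup, hxp⟩ := T.tri_ne h1
  obtain ⟨-, huq, hxq⟩ := T.tri_ne h2
  -- exactness at (u,x)
  obtain ⟨p', hp'p, hp'u, hp'x, hfp', hexux0⟩ := T.edge_faces h1
  have hqp' : q = p' := (hexux0 q h2).resolve_left (Ne.symm hpq)
  subst hqp'
  have hexux : ∀ t, ({u,x,t} : Finset V) ∈ T.faces → t = p ∨ t = q := hexux0
  -- partners at (u,p)
  have h1' : ({u,p,x} : Finset V) ∈ T.faces := by rw [tperm']; exact h1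
  obtain ⟨y, hyx, hyu, hyp, hfy, hexup⟩ := T.edge_faces h1'
  -- y ≠ q
  have hyq : y ≠ q := by
    intro hyq0
    -- face {u,p,q} exists; derive exactness at (u,q) and find impossible 4th nbr
    have hfy' : ({u,p,q} : Finset V) ∈ T.faces := hyq0 ▸ hfy
    have hfupq : ({u,q,p} : Finset V) ∈ T.faces := by rw [tperm']; exact hfy'
    have h2' : ({u,q,x} : Finset V) ∈ T.faces := by rw [tperm']; exact h2
    obtain ⟨z₂, hz₂x, hz₂u, hz₂q, hfz₂, hexuq0⟩ := T.edge_faces h2'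
    have hpz₂ : p = z₂ := (hexuq0 p hfupq).resolve_left (Ne.symm hxp)
    subst hpz₂
    have hexuq : ∀ t, ({u,q,t} : Finset V) ∈ T.faces → t = x ∨ t = p := hexuq0
    -- {x,p,q} ⊆ N(u), card 3; deg u = 4 means there is a 4th neighbour z
    have hsub : ({x,p,q} : Finset V) ⊆ T.graph.neighborFinset u := by
      intro e he; simp only [Finset.mem_insert, Finset.mem_singleton] at he
      rcases he with rfl|rfl|rfl
      · exact T.nbr_of_face (by rw [tperm']; exact h1)
      · exact T.nbr_of_face h1
      · exact T.nbr_of_face h2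
    have hc3 : ({x,p,q} : Finset V).card = 3 := card_three hxp hxq hpq
    have hlt : ({x,p,q} : Finset V).card < (T.graph.neighborFinset u).card := by
      rw [hc3, ← T.deg_card, hdeg]; norm_num
    obtain ⟨z, hzN, hzxpq⟩ := exists_extra hsub hlt
    simp only [Finset.mem_insert, Finset.mem_singleton] at hzxpq
    push_neg at hzxpq
    obtain ⟨hzx, hzp, hzq⟩ := hzxpq
    have hadj : T.graph.Adj u z := (T.mem_nbr).mp hzN
    obtain ⟨s, hsu, hsz, hfs⟩ := T.adj_face hadj
    have hsN : s ∈ T.graph.neighborFinset u := T.nbr_of_face hfs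
    have hNu : T.graph.neighborFinset u = {x,p,q,z} := by
      apply T.nbr_eq_of_card
      · intro e he; simp only [Finset.mem_insert, Finset.mem_singleton] at he
        rcases he with rfl|rfl|rfl|rfl
        · exact hsub (by simp)
        · exact hsub (by simp)
        · exact hsub (by simp)
        · exact hzN
      · rw [hdeg]
        rw [Finset.card_insert_of_notMem (by simp [hxp, hxq, hzx.symm]),
          Finset.card_insert_of_notMem (by simp [hpq, hzp.symm]),
          Finset.card_insert_of_notMem (by simp [hzq.symm]), Finset.card_singleton]
    rw [hNu] at hsN
    simp only [Finset.mem_insert, Finset.mem_singleton] at hsN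
    rcases hsN with h|h|h|h
    · -- s = x : face {u,z,x} → {u,x,z}
      rw [h] at hfs
      rcases hexux z (by rw [tperm']; exact hfs) with h'|h'
      · exact hzp h'
      · exact hzq h'
    · rw [h] at hfs
      rcases hexup z (by rw [tperm']; exact hfs) with h'|h'
      · exact hzx h'
      · exact hzq (h'.trans hyq0)
    · rw [h] at hfs
      rcases hexuq z (by rw [tperm']; exact hfs) with h'|h'
      · exact hzx h'
      · exact hzp h'
    · exact hsz h
  -- now the 4 neighbours are x,p,q,y
  have hNu : T.graph.neighborFinset u = {x,p,q,y} := by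
    apply T.nbr_eq_of_card
    · intro e he; simp only [Finset.mem_insert, Finset.mem_singleton] at he
      rcases he with rfl|rfl|rfl|rfl
      · exact T.nbr_of_face (by rw [tperm']; exact h1)
      · exact T.nbr_of_face h1
      · exact T.nbr_of_face h2
      · exact T.nbr_of_face hfy
    · rw [hdeg]
      rw [Finset.card_insert_of_notMem (by simp [hxp, hxq, hyx.symm]),
        Finset.card_insert_of_notMem (by simp [hpq, hyp.symm]),
        Finset.card_insert_of_notMem (by simp [hyq.symm]), Finset.card_singleton]
  -- partners at (u,q)
  have h2' : ({u,q,x} : Finset V) ∈ T.faces := by rw [tperm']; exact h2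
  obtain ⟨y₂, hy₂x, hy₂u, hy₂q, hfy₂, hexuq0⟩ := T.edge_faces h2'
  have hy₂N : y₂ ∈ T.graph.neighborFinset u := T.nbr_of_face hfy₂
  rw [hNu] at hy₂N
  simp only [Finset.mem_insert, Finset.mem_singleton] at hy₂N
  have hy₂y : y₂ = y := by
    rcases hy₂N with h|h|h|h
    · exact absurd h hy₂x
    · -- y₂ = p : face {u,q,p} → {u,p,q} contradicts exactness at (u,p)
      exfalso
      rw [h] at hfy₂
      rcases hexup q (by rw [tperm']; exact hfy₂) with h'|h'
      · exact hxq h'.symm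
      · exact hyq h'.symm
    · exact absurd h hy₂q
    · exact h
  rw [hy₂y] at hfy₂ hexuq0
  exact ⟨y, hyu, hyx, hyp, hyq, hNu, hfy, hfy₂, hexux, hexup, hexuq0⟩


/-- Link structure of a degree-5 vertex. -/
lemma link5 {u x p q : V} (hdeg : T.graph.degree u = 5)
    (h1 : ({u,x,p} : Finset V) ∈ T.faces) (h2 : ({u,x,q} : Finset V) ∈ T.faces)
    (hpq : p ≠ q) :
    ∃ t1 t2, t1 ≠ u ∧ t1 ≠ x ∧ t1 ≠ p ∧ t1 ≠ q ∧
      t2 ≠ u ∧ t2 ≠ x ∧ t2 ≠ p ∧ t2 ≠ q ∧ t1 ≠ t2 ∧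
      T.graph.neighborFinset u = {x,p,q,t1,t2} ∧
      ({u,q,t1} : Finset V) ∈ T.faces ∧ ({u,t1,t2} : Finset V) ∈ T.faces ∧
      ({u,t2,p} : Finset V) ∈ T.faces ∧
      (∀ t, ({u,x,t} : Finset V) ∈ T.faces → t = p ∨ t = q) ∧
      (∀ t, ({u,p,t} : Finset V) ∈ T.faces → t = x ∨ t = t2) ∧
      (∀ t, ({u,q,t} : Finset V) ∈ T.faces → t = x ∨ t = t1) ∧
      (∀ t, ({u,t1,t} : Finset V) ∈ T.faces → t = q ∨ t = t2) ∧
      (∀ t, ({u,t2,t} : Finset V) ∈ T.faces → t = t1 ∨ t = p) := by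
  obtain ⟨hux, hup, hxp⟩ := T.tri_ne h1
  obtain ⟨-, huq, hxq⟩ := T.tri_ne h2
  have h1' : ({u,p,x} : Finset V) ∈ T.faces := by rw [tperm']; exact h1
  have h2' : ({u,q,x} : Finset V) ∈ T.faces := by rw [tperm']; exact h2
  -- exactness at (u,x)
  obtain ⟨p', hp'p, hp'u, hp'x, hfp', hexux0⟩ := T.edge_faces h1
  have hqp' : q = p' := (hexux0 q h2).resolve_left (Ne.symm hpq)
  subst hqp'
  have hexux : ∀ t, ({u,x,t} : Finset V) ∈ T.faces → t = p ∨ t = q := hexux0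
  -- partners at (u,q)
  obtain ⟨t1, ht1x, ht1u, ht1q, hft1, hexuq⟩ := T.edge_faces h2'
  -- t1 ≠ p
  have ht1p : t1 ≠ p := by
    intro h
    rw [h] at hft1 hexuq
    -- exactness at (u,p): second face of (u,p) is {u,p,q}
    obtain ⟨ζ, hζx, hζu, hζp, hfζ, hexup0⟩ := T.edge_faces h1'
    have hζq : ζ = q := by
      have := (hexup0 q (by rw [tperm']; exact hft1)).resolve_left (Ne.symm hxq)
      exact this.symm
    rw [hζq] at hexup0
    -- neighbours so far
    have hsub : ({x,p,q} : Finset V) ⊆ T.graph.neighborFinset u := by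
      intro e he; simp only [Finset.mem_insert, Finset.mem_singleton] at he
      rcases he with rfl|rfl|rfl
      · exact T.nbr_of_face (by rw [tperm']; exact h1)
      · exact T.nbr_of_face h1
      · exact T.nbr_of_face h2
    obtain ⟨z, hzN, hz3⟩ := exists_extra hsub
      (by rw [card_three hxp hxq hpq, ← T.deg_card, hdeg]; norm_num)
    simp only [Finset.mem_insert, Finset.mem_singleton] at hz3
    push_neg at hz3
    obtain ⟨hzx, hzp, hzq⟩ := hz3
    have hsub4 : ({x,p,q,z} : Finset V) ⊆ T.graph.neighborFinset u := by
      intro e he; simp only [Finset.mem_insert, Finset.mem_singleton] at he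
      rcases he with rfl|rfl|rfl|rfl
      · exact hsub (by simp)
      · exact hsub (by simp)
      · exact hsub (by simp)
      · exact hzN
    have hc4 : ({x,p,q,z} : Finset V).card = 4 := by
      rw [Finset.card_insert_of_notMem (by simp [hxp, hxq, hzx.symm]),
        Finset.card_insert_of_notMem (by simp [hpq, hzp.symm]),
        Finset.card_insert_of_notMem (by simp [hzq.symm]), Finset.card_singleton]
    obtain ⟨z₂, hz₂N, hz₂4⟩ := exists_extra hsub4
      (by rw [hc4, ← T.deg_card, hdeg]; norm_num)
    simp only [Finset.mem_insert, Finset.mem_singleton] at hz₂4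
    push_neg at hz₂4
    obtain ⟨hz₂x, hz₂p, hz₂q, hz₂z⟩ := hz₂4
    have hNu : T.graph.neighborFinset u = {x,p,q,z,z₂} := by
      apply T.nbr_eq_of_card
      · intro e he; simp only [Finset.mem_insert, Finset.mem_singleton] at he
        rcases he with rfl|rfl|rfl|rfl|rfl
        · exact hsub (by simp)
        · exact hsub (by simp)
        · exact hsub (by simp)
        · exact hzN
        · exact hz₂N
      · rw [hdeg]
        rw [Finset.card_insert_of_notMem (by simp [hxp, hxq, hzx.symm, hz₂x.symm]),
          Finset.card_insert_of_notMem (by simp [hpq, hzp.symm, hz₂p.symm]),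
          Finset.card_insert_of_notMem (by simp [hzq.symm, hz₂q.symm]),
          Finset.card_insert_of_notMem (by simp [hz₂z.symm]), Finset.card_singleton]
    -- kill the extra neighbour z
    have hadj : T.graph.Adj u z := (T.mem_nbr).mp hzN
    obtain ⟨s, hsu, hsz, hfs⟩ := T.adj_face hadj
    have hsN : s ∈ T.graph.neighborFinset u := T.nbr_of_face hfs
    rw [hNu] at hsN
    simp only [Finset.mem_insert, Finset.mem_singleton] at hsN
    have hkill : ∀ w, w ≠ z → w ≠ z₂ → ({u,z,w} : Finset V) ∈ T.faces → False := by
      intro w hwz hwz₂ hfw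
      have hwN : w ∈ T.graph.neighborFinset u := T.nbr_of_face hfw
      rw [hNu] at hwN
      simp only [Finset.mem_insert, Finset.mem_singleton] at hwN
      rcases hwN with h'|h'|h'|h'|h'
      · rw [h'] at hfw
        rcases hexux z (by rw [tperm']; exact hfw) with h''|h''
        · exact hzp h''
        · exact hzq h''
      · rw [h'] at hfw
        rcases hexup0 z (by rw [tperm']; exact hfw) with h''|h''
        · exact hzx h''
        · exact hzq h''
      · rw [h'] at hfw
        rcases hexuq z (by rw [tperm']; exact hfw) with h''|h''
        · exact hzx h''
        · exact hzp h''
      · exact hwz h'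
      · exact hwz₂ h'
    rcases hsN with h'|h'|h'|h'|h'
    · exact hkill s (by rw [h']; exact Ne.symm hzx) (by rw [h']; exact Ne.symm hz₂x) hfs
    · exact hkill s (by rw [h']; exact Ne.symm hzp) (by rw [h']; exact Ne.symm hz₂p) hfs
    · exact hkill s (by rw [h']; exact Ne.symm hzq) (by rw [h']; exact Ne.symm hz₂q) hfs
    · exact hsz h'
    · -- s = z₂ : look at the second face on (u,z)
      rw [h'] at hfs
      obtain ⟨ξ, hξz₂, hξu, hξz, hfξ, -⟩ := T.edge_faces hfs
      exact hkill ξ hξz hξz₂ hfξ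
  -- partners at (u,t1)
  have hft1' : ({u,t1,q} : Finset V) ∈ T.faces := by rw [tperm']; exact hft1
  obtain ⟨t2, ht2q, ht2u, ht2t1, hft12, hexut1⟩ := T.edge_faces hft1'
  have ht2x : t2 ≠ x := by
    intro h
    rw [h] at hft12
    rcases hexux t1 (by rw [tperm']; exact hft12) with h'|h'
    · exact ht1p h'
    · exact ht1q h'
  -- t2 ≠ p
  have ht2p : t2 ≠ p := by
    intro h
    rw [h] at hft12 hexut1
    obtain ⟨ζ, hζx, hζu, hζp, hfζ, hexup0⟩ := T.edge_faces h1'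
    have hζt1 : ζ = t1 := by
      have := (hexup0 t1 (by rw [tperm']; exact hft12)).resolve_left ht1x
      exact this.symm
    rw [hζt1] at hexup0
    have hsub : ({x,p,q,t1} : Finset V) ⊆ T.graph.neighborFinset u := by
      intro e he; simp only [Finset.mem_insert, Finset.mem_singleton] at he
      rcases he with rfl|rfl|rfl|rfl
      · exact T.nbr_of_face (by rw [tperm']; exact h1)
      · exact T.nbr_of_face h1
      · exact T.nbr_of_face h2
      · exact T.nbr_of_face hft1
    have hc4 : ({x,p,q,t1} : Finset V).card = 4 := by
      rw [Finset.card_insert_of_notMem (by simp [hxp, hxq, ht1x.symm]),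
        Finset.card_insert_of_notMem (by simp [hpq, ht1p.symm]),
        Finset.card_insert_of_notMem (by simp [ht1q.symm]), Finset.card_singleton]
    obtain ⟨z, hzN, hz4⟩ := exists_extra hsub
      (by rw [hc4, ← T.deg_card, hdeg]; norm_num)
    simp only [Finset.mem_insert, Finset.mem_singleton] at hz4
    push_neg at hz4
    obtain ⟨hzx, hzp, hzq, hzt1⟩ := hz4
    have hNu : T.graph.neighborFinset u = {x,p,q,t1,z} := by
      apply T.nbr_eq_of_card
      · intro e he; simp only [Finset.mem_insert, Finset.mem_singleton] at he
        rcases he with rfl|rfl|rfl|rfl|rfl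
        · exact hsub (by simp)
        · exact hsub (by simp)
        · exact hsub (by simp)
        · exact hsub (by simp)
        · exact hzN
      · rw [hdeg]
        rw [Finset.card_insert_of_notMem (by simp [hxp, hxq, ht1x.symm, hzx.symm]),
          Finset.card_insert_of_notMem (by simp [hpq, ht1p.symm, hzp.symm]),
          Finset.card_insert_of_notMem (by simp [ht1q.symm, hzq.symm]),
          Finset.card_insert_of_notMem (by simp [hzt1.symm]), Finset.card_singleton]
    have hadj : T.graph.Adj u z := (T.mem_nbr).mp hzN
    obtain ⟨s, hsu, hsz, hfs⟩ := T.adj_face hadj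
    have hsN : s ∈ T.graph.neighborFinset u := T.nbr_of_face hfs
    rw [hNu] at hsN
    simp only [Finset.mem_insert, Finset.mem_singleton] at hsN
    rcases hsN with h'|h'|h'|h'|h'
    · rw [h'] at hfs
      rcases hexux z (by rw [tperm']; exact hfs) with h''|h''
      · exact hzp h''
      · exact hzq h''
    · rw [h'] at hfs
      rcases hexup0 z (by rw [tperm']; exact hfs) with h''|h''
      · exact hzx h''
      · exact hzt1 h''
    · rw [h'] at hfs
      rcases hexuq z (by rw [tperm']; exact hfs) with h''|h''
      · exact hzx h''
      · exact hzt1 h''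
    · rw [h'] at hfs
      rcases hexut1 z (by rw [tperm']; exact hfs) with h''|h''
      · exact hzq h''
      · exact hzp h''
    · exact hsz h'
  -- so N(u) = {x,p,q,t1,t2}
  have hNu : T.graph.neighborFinset u = {x,p,q,t1,t2} := by
    apply T.nbr_eq_of_card
    · intro e he; simp only [Finset.mem_insert, Finset.mem_singleton] at he
      rcases he with rfl|rfl|rfl|rfl|rfl
      · exact T.nbr_of_face (by rw [tperm']; exact h1)
      · exact T.nbr_of_face h1
      · exact T.nbr_of_face h2
      · exact T.nbr_of_face hft1
      · exact T.nbr_of_face hft12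
    · rw [hdeg]
      rw [Finset.card_insert_of_notMem (by simp [hxp, hxq, ht1x.symm, ht2x.symm]),
        Finset.card_insert_of_notMem (by simp [hpq, ht1p.symm, ht2p.symm]),
        Finset.card_insert_of_notMem (by simp [ht1q.symm, ht2q.symm]),
        Finset.card_insert_of_notMem (by simp [ht2t1.symm]), Finset.card_singleton]
  -- partners at (u,t2)
  have hft12' : ({u,t2,t1} : Finset V) ∈ T.faces := by rw [tperm']; exact hft12
  obtain ⟨ξ, hξt1, hξu, hξt2, hfξ, hexut20⟩ := T.edge_faces hft12'
  have hξN : ξ ∈ T.graph.neighborFinset u := T.nbr_of_face hfξ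
  rw [hNu] at hξN
  simp only [Finset.mem_insert, Finset.mem_singleton] at hξN
  have hξp : ξ = p := by
    rcases hξN with h'|h'|h'|h'|h'
    · exfalso
      rw [h'] at hfξ
      rcases hexux t2 (by rw [tperm']; exact hfξ) with h''|h''
      · exact ht2p h''
      · exact ht2q h''
    · exact h'
    · exfalso
      rw [h'] at hfξ
      rcases hexuq t2 (by rw [tperm']; exact hfξ) with h''|h''
      · exact ht2x h''
      · exact ht2t1 (h''.symm ▸ rfl : t2 = t1)
    · exact absurd h' hξt1
    · exact absurd h' hξt2
  rw [hξp] at hfξ hexut20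
  -- exactness at (u,p)
  obtain ⟨ζ, hζx, hζu, hζp, hfζ, hexup0⟩ := T.edge_faces h1'
  have hζN : ζ ∈ T.graph.neighborFinset u := T.nbr_of_face hfζ
  rw [hNu] at hζN
  simp only [Finset.mem_insert, Finset.mem_singleton] at hζN
  have hζt2 : ζ = t2 := by
    rcases hζN with h'|h'|h'|h'|h'
    · exact absurd h' hζx
    · exact absurd h' hζp
    · exfalso
      rw [h'] at hfζ
      rcases hexuq p (by rw [tperm']; exact hfζ) with h''|h''
      · exact hxp h''.symm
      · exact ht1p h''.symm
    · exfalso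
      rw [h'] at hfζ
      rcases hexut1 p (by rw [tperm']; exact hfζ) with h''|h''
      · exact hpq h''
      · exact ht2p h''.symm
    · exact h'
  rw [hζt2] at hexup0
  exact ⟨t1, t2, ht1u, ht1x, ht1p, ht1q, ht2u, ht2x, ht2p, ht2q, Ne.symm ht2t1,
    hNu, hft1, hft12, hfξ, hexux, hexup0, hexuq, hexut1, hexut20⟩


lemma pair_sub_tri {e : Finset V} {x y z : V} (he : e.card = 2)
    (hsub : e ⊆ ({x,y,z} : Finset V)) :
    e = {x,y} ∨ e = {x,z} ∨ e = {y,z} := by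
  obtain ⟨s, t, hst, rfl⟩ := Finset.card_eq_two.mp he
  have hs := hsub (by simp : s ∈ ({s,t} : Finset V))
  have ht := hsub (by simp : t ∈ ({s,t} : Finset V))
  simp only [Finset.mem_insert, Finset.mem_singleton] at hs ht
  rcases hs with rfl|rfl|rfl <;> rcases ht with rfl|rfl|rfl <;>
    first
      | exact absurd rfl hst
      | simp [Finset.pair_comm]
      | (left; rfl)
      | (right; left; rfl)
      | (right; right; rfl)
      | (left; exact Finset.pair_comm _ _)
      | (right; left; exact Finset.pair_comm _ _)
      | (right; right; exact Finset.pair_comm _ _)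

lemma pair_eq_of_mem {e : Finset V} {x y : V} (he : e.card = 2)
    (hx : x ∈ e) (hy : y ∈ e) (hxy : x ≠ y) : e = ({x,y} : Finset V) := by
  have hsub : ({x,y} : Finset V) ⊆ e := by
    intro s hs; simp only [Finset.mem_insert, Finset.mem_singleton] at hs
    rcases hs with rfl|rfl <;> assumption
  exact (Finset.eq_of_subset_of_card_le hsub (by rw [he, Finset.card_pair hxy])).symm

/-- the set of faces after flipping edge (a,b) with opposite vertices c,d -/
def flipFaces (a b c d : V) : Finset (Finset V) :=
  insert {a,c,d} (insert {b,c,d} (T.faces \ {({a,b,c} : Finset V), ({a,b,d} : Finset V)}))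

lemma flip_mem {a b c d : V} (g : Finset V) : g ∈ T.flipFaces a b c d ↔
    g = {a,c,d} ∨ g = {b,c,d} ∨
      (g ∈ T.faces ∧ g ≠ {a,b,c} ∧ g ≠ {a,b,d}) := by
  simp only [flipFaces, Finset.mem_insert, Finset.mem_sdiff, Finset.mem_singleton]
  tauto

/-- Distinctness package for a flip configuration. -/
lemma flip_distinct {a b c d : V} (hf1 : ({a,b,c} : Finset V) ∈ T.faces)
    (hf2 : ({a,b,d} : Finset V) ∈ T.faces) (hcd : c ≠ d)
    (hnadj : ¬ T.graph.Adj c d) :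
    a ≠ b ∧ a ≠ c ∧ b ≠ c ∧ a ≠ d ∧ b ≠ d ∧
    ({a,c,d} : Finset V) ∉ T.faces ∧ ({b,c,d} : Finset V) ∉ T.faces ∧
    ({a,b,c} : Finset V) ≠ {a,b,d} ∧ ({a,c,d} : Finset V) ≠ {b,c,d} := by
  obtain ⟨hab, hac, hbc⟩ := T.tri_ne hf1
  obtain ⟨-, had, hbd⟩ := T.tri_ne hf2
  refine ⟨hab, hac, hbc, had, hbd, fun h => hnadj (T.face_adj'' h),
    fun h => hnadj (T.face_adj'' h), ?_, ?_⟩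
  · intro h
    have hc : c ∈ ({a,b,d} : Finset V) := h ▸ (by simp : c ∈ ({a,b,c} : Finset V))
    simp only [Finset.mem_insert, Finset.mem_singleton] at hc
    rcases hc with h'|h'|h'
    · exact hac h'.symm
    · exact hbc h'.symm
    · exact hcd h'
  · intro h
    have hc : a ∈ ({b,c,d} : Finset V) := h ▸ (by simp : a ∈ ({a,c,d} : Finset V))
    simp only [Finset.mem_insert, Finset.mem_singleton] at hc
    rcases hc with h'|h'|h'
    · exact hab h'
    · exact hac h'
    · exact had h'

lemma flip_ab_faces {a b c d : V} (hf1 : ({a,b,c} : Finset V) ∈ T.faces)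
    (hf2 : ({a,b,d} : Finset V) ∈ T.faces) (hcd : c ≠ d) :
    ∀ f ∈ T.faces, ({a,b} : Finset V) ⊆ f → f = {a,b,c} ∨ f = {a,b,d} := by
  obtain ⟨hab, hac, hbc⟩ := T.tri_ne hf1
  obtain ⟨d', hd'c, hd'a, hd'b, hfd', hexab0⟩ := T.edge_faces hf1
  have hdd' : d = d' := (hexab0 d hf2).resolve_left (Ne.symm hcd)
  subst hdd'
  intro f hf hsub
  obtain ⟨t, htA, htB, hft⟩ := T.face_decomp hf (hsub (by simp)) (hsub (by simp)) hab
  rcases hexab0 t (hft ▸ hf) with h|h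
  · left; rw [hft, h]
  · right; rw [hft, h]

set_option maxHeartbeats 1000000 in
lemma flip_card_eq {a b c d : V} (hf1 : ({a,b,c} : Finset V) ∈ T.faces)
    (hf2 : ({a,b,d} : Finset V) ∈ T.faces) (hcd : c ≠ d)
    (hnadj : ¬ T.graph.Adj c d) :
    ∀ f ∈ T.flipFaces a b c d, f.card = 3 := by
  obtain ⟨hab, hac, hbc, had, hbd, -, -, -, -⟩ := T.flip_distinct hf1 hf2 hcd hnadj
  intro f hf
  rw [T.flip_mem] at hf
  rcases hf with rfl|rfl|⟨hf, -, -⟩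
  · exact card_three hac had hcd
  · exact card_three hbc hbd hcd
  · exact T.card_eq _ hf

set_option maxHeartbeats 1000000 in
lemma flip_covers {a b c d : V} (hf1 : ({a,b,c} : Finset V) ∈ T.faces)
    (hf2 : ({a,b,d} : Finset V) ∈ T.faces) :
    ∀ x : V, ∃ f ∈ T.flipFaces a b c d, x ∈ f := by
  intro x
  obtain ⟨f, hf, hx⟩ := T.covers x
  have hmemnew1 : ({a,c,d} : Finset V) ∈ T.flipFaces a b c d := by
    rw [T.flip_mem]; left; rfl
  have hmemnew2 : ({b,c,d} : Finset V) ∈ T.flipFaces a b c d := by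
    rw [T.flip_mem]; right; left; rfl
  by_cases h1 : f = ({a,b,c} : Finset V)
  · rw [h1] at hx
    simp only [Finset.mem_insert, Finset.mem_singleton] at hx
    rcases hx with rfl|rfl|rfl
    · exact ⟨{x,c,d}, hmemnew1, by simp⟩
    · exact ⟨{x,c,d}, hmemnew2, by simp⟩
    · exact ⟨{a,x,d}, hmemnew1, by simp⟩
  · by_cases h2 : f = ({a,b,d} : Finset V)
    · rw [h2] at hx
      simp only [Finset.mem_insert, Finset.mem_singleton] at hx
      rcases hx with rfl|rfl|rfl
      · exact ⟨{x,c,d}, hmemnew1, by simp⟩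
      · exact ⟨{x,c,d}, hmemnew2, by simp⟩
      · exact ⟨{a,c,x}, hmemnew1, by simp⟩
    · refine ⟨f, ?_, hx⟩
      rw [T.flip_mem]; right; right; exact ⟨hf, h1, h2⟩

set_option maxHeartbeats 1000000 in
lemma flip_euler {a b c d : V} (hf1 : ({a,b,c} : Finset V) ∈ T.faces)
    (hf2 : ({a,b,d} : Finset V) ∈ T.faces) (hcd : c ≠ d)
    (hnadj : ¬ T.graph.Adj c d) :
    (T.flipFaces a b c d).card = 2 * Fintype.card V - 4 := by
  obtain ⟨hab, hac, hbc, had, hbd, hacd_nf, hbcd_nf, hf1f2, hnew_ne⟩ :=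
    T.flip_distinct hf1 hf2 hcd hnadj
  have hsubpair : ({({a,b,c} : Finset V), {a,b,d}} : Finset (Finset V)) ⊆ T.faces := by
    intro g hg; simp only [Finset.mem_insert, Finset.mem_singleton] at hg
    rcases hg with rfl|rfl
    · exact hf1
    · exact hf2
  have hcard_sd : (T.faces \ {({a,b,c} : Finset V), {a,b,d}}).card = T.faces.card - 2 := by
    rw [Finset.card_sdiff_of_subset hsubpair, Finset.card_pair hf1f2]
  have hb_notin : ({b,c,d} : Finset V) ∉ T.faces \ {({a,b,c} : Finset V), {a,b,d}} := by
    intro h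
    exact hbcd_nf (Finset.mem_sdiff.mp h).1
  have ha_notin : ({a,c,d} : Finset V) ∉
      insert ({b,c,d} : Finset V) (T.faces \ {({a,b,c} : Finset V), {a,b,d}}) := by
    intro h
    simp only [Finset.mem_insert] at h
    rcases h with h|h
    · exact hnew_ne h
    · exact hacd_nf (Finset.mem_sdiff.mp h).1
  have h2card : 2 ≤ T.faces.card := by
    calc 2 = ({({a,b,c} : Finset V), {a,b,d}} : Finset (Finset V)).card :=
          (Finset.card_pair hf1f2).symm
      _ ≤ T.faces.card := Finset.card_le_card hsubpair
  have hcount : (T.flipFaces a b c d).card = T.faces.card := by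
    rw [flipFaces, Finset.card_insert_of_notMem ha_notin,
      Finset.card_insert_of_notMem hb_notin, hcard_sd]
    omega
  rw [hcount, T.euler]

set_option maxHeartbeats 1000000 in
lemma flip_face_connected {a b c d : V} (hf1 : ({a,b,c} : Finset V) ∈ T.faces)
    (hf2 : ({a,b,d} : Finset V) ∈ T.faces) :
    ∀ A : Finset V, A.Nonempty → A ≠ Finset.univ →
      ∃ f ∈ T.flipFaces a b c d, (∃ x ∈ f, x ∈ A) ∧ ∃ y ∈ f, y ∉ A := by
  have hmemnew1 : ({a,c,d} : Finset V) ∈ T.flipFaces a b c d := by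
    rw [T.flip_mem]; left; rfl
  have hmemnew2 : ({b,c,d} : Finset V) ∈ T.flipFaces a b c d := by
    rw [T.flip_mem]; right; left; rfl
  intro A hA hAne
  obtain ⟨f, hf, ⟨a', ha'f, ha'A⟩, ⟨b', hb'f, hb'A⟩⟩ := T.face_connected A hA hAne
  by_cases h1 : f = ({a,b,c} : Finset V)
  · rw [h1] at ha'f hb'f
    by_cases hcA : c ∈ A
    · simp only [Finset.mem_insert, Finset.mem_singleton] at hb'f
      rcases hb'f with rfl|rfl|rfl
      · exact ⟨{b',c,d}, hmemnew1, ⟨c, by simp, hcA⟩, ⟨b', by simp, hb'A⟩⟩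
      · exact ⟨{b',c,d}, hmemnew2, ⟨c, by simp, hcA⟩, ⟨b', by simp, hb'A⟩⟩
      · exact absurd hcA hb'A
    · simp only [Finset.mem_insert, Finset.mem_singleton] at ha'f
      rcases ha'f with rfl|rfl|rfl
      · exact ⟨{a',c,d}, hmemnew1, ⟨a', by simp, ha'A⟩, ⟨c, by simp, hcA⟩⟩
      · exact ⟨{a',c,d}, hmemnew2, ⟨a', by simp, ha'A⟩, ⟨c, by simp, hcA⟩⟩
      · exact absurd ha'A hcA
  · by_cases h2 : f = ({a,b,d} : Finset V)
    · rw [h2] at ha'f hb'f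
      by_cases hdA : d ∈ A
      · simp only [Finset.mem_insert, Finset.mem_singleton] at hb'f
        rcases hb'f with rfl|rfl|rfl
        · exact ⟨{b',c,d}, hmemnew1, ⟨d, by simp, hdA⟩, ⟨b', by simp, hb'A⟩⟩
        · exact ⟨{b',c,d}, hmemnew2, ⟨d, by simp, hdA⟩, ⟨b', by simp, hb'A⟩⟩
        · exact absurd hdA hb'A
      · simp only [Finset.mem_insert, Finset.mem_singleton] at ha'f
        rcases ha'f with rfl|rfl|rfl
        · exact ⟨{a',c,d}, hmemnew1, ⟨a', by simp, ha'A⟩, ⟨d, by simp, hdA⟩⟩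
        · exact ⟨{a',c,d}, hmemnew2, ⟨a', by simp, ha'A⟩, ⟨d, by simp, hdA⟩⟩
        · exact absurd ha'A hdA
    · refine ⟨f, ?_, ⟨a', ha'f, ha'A⟩, ⟨b', hb'f, hb'A⟩⟩
      rw [T.flip_mem]; right; right; exact ⟨hf, h1, h2⟩

set_option maxHeartbeats 2000000 in
lemma flip_two_faces {a b c d : V} (hf1 : ({a,b,c} : Finset V) ∈ T.faces)
    (hf2 : ({a,b,d} : Finset V) ∈ T.faces) (hcd : c ≠ d)
    (hnadj : ¬ T.graph.Adj c d) :
    ∀ e : Finset V, e.card = 2 → (∃ f ∈ T.flipFaces a b c d, e ⊆ f) →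
      ((T.flipFaces a b c d).filter fun f => e ⊆ f).card = 2 := by
  obtain ⟨hab, hac, hbc, had, hbd, hacd_nf, hbcd_nf, hf1f2, hnew_ne⟩ :=
    T.flip_distinct hf1 hf2 hcd hnadj
  have hab_faces := T.flip_ab_faces hf1 hf2 hcd
  have hmemnew1 : ({a,c,d} : Finset V) ∈ T.flipFaces a b c d := by
    rw [T.flip_mem]; left; rfl
  have hmemnew2 : ({b,c,d} : Finset V) ∈ T.flipFaces a b c d := by
    rw [T.flip_mem]; right; left; rfl
  have hmemold : ∀ g ∈ T.faces, g ≠ ({a,b,c} : Finset V) → g ≠ ({a,b,d} : Finset V) →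
      g ∈ T.flipFaces a b c d := by
    intro g hg h1 h2; rw [T.flip_mem]; right; right; exact ⟨hg, h1, h2⟩
  intro e he hex
  by_cases hCcd : c ∈ e ∧ d ∈ e
  · have hecd : e = ({c,d} : Finset V) := pair_eq_of_mem he hCcd.1 hCcd.2 hcd
    subst hecd
    have hfilter : (T.flipFaces a b c d).filter (fun f => ({c,d} : Finset V) ⊆ f) =
        {({a,c,d} : Finset V), {b,c,d}} := by
      ext g
      simp only [Finset.mem_filter, Finset.mem_insert, Finset.mem_singleton]
      constructor
      · rintro ⟨hg, hsub⟩
        rw [T.flip_mem] at hg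
        rcases hg with rfl|rfl|⟨hg, -, -⟩
        · exact Or.inl rfl
        · exact Or.inr rfl
        · exact absurd ⟨hcd, g, hg, hsub (by simp), hsub (by simp)⟩ hnadj
      · rintro (rfl|rfl)
        · refine ⟨hmemnew1, ?_⟩
          intro s hs; simp only [Finset.mem_insert, Finset.mem_singleton] at hs ⊢; tauto
        · refine ⟨hmemnew2, ?_⟩
          intro s hs; simp only [Finset.mem_insert, Finset.mem_singleton] at hs ⊢; tauto
    rw [hfilter]
    exact Finset.card_pair hnew_ne
  · by_cases hCab : a ∈ e ∧ b ∈ e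
    · exfalso
      have heab : e = ({a,b} : Finset V) := pair_eq_of_mem he hCab.1 hCab.2 hab
      subst heab
      obtain ⟨f', hf', hsub⟩ := hex
      rw [T.flip_mem] at hf'
      rcases hf' with rfl|rfl|⟨hf', hne1, hne2⟩
      · have hb : b ∈ ({a,c,d} : Finset V) := hsub (by simp)
        simp only [Finset.mem_insert, Finset.mem_singleton] at hb
        rcases hb with h|h|h
        · exact hab h.symm
        · exact hbc h
        · exact hbd h
      · have ha : a ∈ ({b,c,d} : Finset V) := hsub (by simp)
        simp only [Finset.mem_insert, Finset.mem_singleton] at ha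
        rcases ha with h|h|h
        · exact hab h
        · exact hac h
        · exact had h
      · rcases hab_faces f' hf' hsub with h|h
        · exact hne1 h
        · exact hne2 h
    · push_neg at hCcd hCab
      have hold : ∃ f ∈ T.faces, e ⊆ f := by
        obtain ⟨f', hf', hsub⟩ := hex
        rw [T.flip_mem] at hf'
        rcases hf' with rfl|rfl|⟨hf', -, -⟩
        · rcases pair_sub_tri he hsub with h|h|h
          · exact ⟨{a,b,c}, hf1, by rw [h]; intro s hs; simp only [Finset.mem_insert, Finset.mem_singleton] at hs ⊢; tauto⟩
          · exact ⟨{a,b,d}, hf2, by rw [h]; intro s hs; simp only [Finset.mem_insert, Finset.mem_singleton] at hs ⊢; tauto⟩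
          · exfalso; rw [h] at hCcd; exact (hCcd (by simp)) (by simp)
        · rcases pair_sub_tri he hsub with h|h|h
          · exact ⟨{a,b,c}, hf1, by rw [h]; intro s hs; simp only [Finset.mem_insert, Finset.mem_singleton] at hs ⊢; tauto⟩
          · exact ⟨{a,b,d}, hf2, by rw [h]; intro s hs; simp only [Finset.mem_insert, Finset.mem_singleton] at hs ⊢; tauto⟩
          · exfalso; rw [h] at hCcd; exact (hCcd (by simp)) (by simp)
        · exact ⟨f', hf', hsub⟩
      have h2 := T.two_faces e he hold
      obtain ⟨g1, g2, hg12, hgg⟩ := Finset.card_eq_two.mp h2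
      have hg1 : g1 ∈ T.faces ∧ e ⊆ g1 := by
        have hm : g1 ∈ T.faces.filter (fun f => e ⊆ f) := by rw [hgg]; simp
        simpa using hm
      have hg2 : g2 ∈ T.faces ∧ e ⊆ g2 := by
        have hm : g2 ∈ T.faces.filter (fun f => e ⊆ f) := by rw [hgg]; simp
        simpa using hm
      have hold_iff : ∀ g, g ∈ T.faces → e ⊆ g → g = g1 ∨ g = g2 := by
        intro g hg hsub
        have hm : g ∈ T.faces.filter (fun f => e ⊆ f) := by simp [hg, hsub]
        rw [hgg] at hm; simpa using hm
      -- common machinery: e is contained in exactly one new face `fnew`, and its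
      -- old faces are `fbase` (removed) and one survivor.
      have hmain : ∀ fnew fbase : Finset V,
          fnew ∈ T.flipFaces a b c d → fnew ∉ T.faces → e ⊆ fnew →
          (∀ g ∈ T.flipFaces a b c d, e ⊆ g → g ∉ T.faces → g = fnew) →
          fbase ∈ T.faces → e ⊆ fbase →
          (fbase = {a,b,c} ∨ fbase = {a,b,d}) →
          (∀ g ∈ T.faces, e ⊆ g → g = fbase ∨ (g ≠ {a,b,c} ∧ g ≠ {a,b,d})) →
          ((T.flipFaces a b c d).filter fun f => e ⊆ f).card = 2 := by
        intro fnew fbase hfnew_mem hfnew_old hsubnew hnew_uniq hfbase hsubbase hbase_eq hother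
        have hfb_mem : fbase = g1 ∨ fbase = g2 := hold_iff fbase hfbase hsubbase
        have hoth : ∃ goth, goth ∈ T.faces ∧ e ⊆ goth ∧ goth ≠ fbase ∧
            ∀ g ∈ T.faces, e ⊆ g → g = fbase ∨ g = goth := by
          rcases hfb_mem with rfl|rfl
          · exact ⟨g2, hg2.1, hg2.2, Ne.symm hg12, fun g hg hs => hold_iff g hg hs⟩
          · exact ⟨g1, hg1.1, hg1.2, hg12, fun g hg hs => (hold_iff g hg hs).symm⟩
        obtain ⟨goth, hgoth_f, hgoth_sub, hgoth_ne, hgoth_iff⟩ := hoth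
        have hgoth_ab : goth ≠ ({a,b,c} : Finset V) ∧ goth ≠ ({a,b,d} : Finset V) := by
          rcases hother goth hgoth_f hgoth_sub with h|h
          · exact absurd h hgoth_ne
          · exact h
        have hfilter : (T.flipFaces a b c d).filter (fun f => e ⊆ f) = {fnew, goth} := by
          ext g
          simp only [Finset.mem_filter, Finset.mem_insert, Finset.mem_singleton]
          constructor
          · rintro ⟨hg, hsub⟩
            by_cases hgold : g ∈ T.faces
            · rcases hgoth_iff g hgold hsub with h|h
              · exfalso
                rw [T.flip_mem] at hg
                rcases hg with rfl|rfl|⟨-, hne1, hne2⟩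
                · exact hacd_nf (h ▸ hfbase)
                · exact hbcd_nf (h ▸ hfbase)
                · rcases hbase_eq with hb|hb
                  · exact hne1 (h.trans hb)
                  · exact hne2 (h.trans hb)
              · exact Or.inr h
            · exact Or.inl (hnew_uniq g hg hsub hgold)
          · rintro (rfl|rfl)
            · exact ⟨hfnew_mem, hsubnew⟩
            · exact ⟨hmemold _ hgoth_f hgoth_ab.1 hgoth_ab.2, hgoth_sub⟩
        rw [hfilter]
        refine Finset.card_pair ?_
        intro h
        exact hfnew_old (h ▸ hgoth_f)
      by_cases hCa : e ⊆ ({a,c,d} : Finset V)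
      · have hecase : e = ({a,c} : Finset V) ∨ e = ({a,d} : Finset V) := by
          rcases pair_sub_tri he hCa with h|h|h
          · exact Or.inl h
          · exact Or.inr h
          · exfalso; rw [h] at hCcd; exact (hCcd (by simp)) (by simp)
        have hnotsub_bcd : ¬ e ⊆ ({b,c,d} : Finset V) := by
          intro hsub
          have ha_e : a ∈ e := by
            rcases hecase with h|h <;> rw [h] <;> simp
          have hmm : a ∈ ({b,c,d} : Finset V) := hsub ha_e
          simp only [Finset.mem_insert, Finset.mem_singleton] at hmm
          rcases hmm with h|h|h
          · exact hab h
          · exact hac h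
          · exact had h
        have hnew_uniq : ∀ g ∈ T.flipFaces a b c d, e ⊆ g → g ∉ T.faces →
            g = ({a,c,d} : Finset V) := by
          intro g hg hsub hgold
          rw [T.flip_mem] at hg
          rcases hg with rfl|rfl|⟨hgf, -, -⟩
          · rfl
          · exact absurd hsub hnotsub_bcd
          · exact absurd hgf hgold
        rcases hecase with h|h
        · refine hmain {a,c,d} {a,b,c} hmemnew1 hacd_nf hCa hnew_uniq hf1
            (by rw [h]; intro s hs; simp only [Finset.mem_insert, Finset.mem_singleton] at hs ⊢; tauto)
            (Or.inl rfl) ?_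
          intro g hg hsub
          by_cases hgf1 : g = ({a,b,c} : Finset V)
          · exact Or.inl hgf1
          · refine Or.inr ⟨hgf1, ?_⟩
            intro hgf2
            have hmm : c ∈ ({a,b,d} : Finset V) := hgf2 ▸ hsub (by rw [h]; simp)
            simp only [Finset.mem_insert, Finset.mem_singleton] at hmm
            rcases hmm with h'|h'|h'
            · exact hac h'.symm
            · exact hbc h'.symm
            · exact hcd h'
        · refine hmain {a,c,d} {a,b,d} hmemnew1 hacd_nf hCa hnew_uniq hf2
            (by rw [h]; intro s hs; simp only [Finset.mem_insert, Finset.mem_singleton] at hs ⊢; tauto)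
            (Or.inr rfl) ?_
          intro g hg hsub
          by_cases hgf2 : g = ({a,b,d} : Finset V)
          · exact Or.inl hgf2
          · refine Or.inr ⟨?_, hgf2⟩
            intro hgf1
            have hmm : d ∈ ({a,b,c} : Finset V) := hgf1 ▸ hsub (by rw [h]; simp)
            simp only [Finset.mem_insert, Finset.mem_singleton] at hmm
            rcases hmm with h'|h'|h'
            · exact had h'.symm
            · exact hbd h'.symm
            · exact hcd h'.symm
      · by_cases hCb : e ⊆ ({b,c,d} : Finset V)
        · have hecase : e = ({b,c} : Finset V) ∨ e = ({b,d} : Finset V) := by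
            rcases pair_sub_tri he hCb with h|h|h
            · exact Or.inl h
            · exact Or.inr h
            · exfalso; rw [h] at hCcd; exact (hCcd (by simp)) (by simp)
          have hnew_uniq : ∀ g ∈ T.flipFaces a b c d, e ⊆ g → g ∉ T.faces →
              g = ({b,c,d} : Finset V) := by
            intro g hg hsub hgold
            rw [T.flip_mem] at hg
            rcases hg with rfl|rfl|⟨hgf, -, -⟩
            · exact absurd hsub hCa
            · rfl
            · exact absurd hgf hgold
          rcases hecase with h|h
          · refine hmain {b,c,d} {a,b,c} hmemnew2 hbcd_nf hCb hnew_uniq hf1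
              (by rw [h]; intro s hs; simp only [Finset.mem_insert, Finset.mem_singleton] at hs ⊢; tauto)
              (Or.inl rfl) ?_
            intro g hg hsub
            by_cases hgf1 : g = ({a,b,c} : Finset V)
            · exact Or.inl hgf1
            · refine Or.inr ⟨hgf1, ?_⟩
              intro hgf2
              have hmm : c ∈ ({a,b,d} : Finset V) := hgf2 ▸ hsub (by rw [h]; simp)
              simp only [Finset.mem_insert, Finset.mem_singleton] at hmm
              rcases hmm with h'|h'|h'
              · exact hac h'.symm
              · exact hbc h'.symm
              · exact hcd h'
          · refine hmain {b,c,d} {a,b,d} hmemnew2 hbcd_nf hCb hnew_uniq hf2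
              (by rw [h]; intro s hs; simp only [Finset.mem_insert, Finset.mem_singleton] at hs ⊢; tauto)
              (Or.inr rfl) ?_
            intro g hg hsub
            by_cases hgf2 : g = ({a,b,d} : Finset V)
            · exact Or.inl hgf2
            · refine Or.inr ⟨?_, hgf2⟩
              intro hgf1
              have hmm : d ∈ ({a,b,c} : Finset V) := hgf1 ▸ hsub (by rw [h]; simp)
              simp only [Finset.mem_insert, Finset.mem_singleton] at hmm
              rcases hmm with h'|h'|h'
              · exact had h'.symm
              · exact hbd h'.symm
              · exact hcd h'.symm
        · -- e avoids both new faces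
          have hgne : ∀ g, g ∈ T.faces → e ⊆ g →
              g ≠ ({a,b,c} : Finset V) ∧ g ≠ ({a,b,d} : Finset V) := by
            intro g hg hsub
            constructor
            · intro h
              rw [h] at hsub
              rcases pair_sub_tri he hsub with h'|h'|h'
              · rw [h'] at hCab; exact (hCab (by simp)) (by simp)
              · exact hCa (by rw [h']; intro s hs; simp only [Finset.mem_insert, Finset.mem_singleton] at hs ⊢; tauto)
              · exact hCb (by rw [h']; intro s hs; simp only [Finset.mem_insert, Finset.mem_singleton] at hs ⊢; tauto)
            · intro h
              rw [h] at hsub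
              rcases pair_sub_tri he hsub with h'|h'|h'
              · rw [h'] at hCab; exact (hCab (by simp)) (by simp)
              · exact hCa (by rw [h']; intro s hs; simp only [Finset.mem_insert, Finset.mem_singleton] at hs ⊢; tauto)
              · exact hCb (by rw [h']; intro s hs; simp only [Finset.mem_insert, Finset.mem_singleton] at hs ⊢; tauto)
          have hfilter : (T.flipFaces a b c d).filter (fun f => e ⊆ f) = {g1, g2} := by
            ext g
            simp only [Finset.mem_filter, Finset.mem_insert, Finset.mem_singleton]
            constructor
            · rintro ⟨hg, hsub⟩
              rw [T.flip_mem] at hg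
              rcases hg with rfl|rfl|⟨hg, -, -⟩
              · exact absurd hsub hCa
              · exact absurd hsub hCb
              · exact hold_iff g hg hsub
            · rintro (h|h)
              · rw [h]
                exact ⟨hmemold _ hg1.1 (hgne g1 hg1.1 hg1.2).1 (hgne g1 hg1.1 hg1.2).2, hg1.2⟩
              · rw [h]
                exact ⟨hmemold _ hg2.1 (hgne g2 hg2.1 hg2.2).1 (hgne g2 hg2.1 hg2.2).2, hg2.2⟩
          rw [hfilter]
          exact Finset.card_pair hg12

set_option maxHeartbeats 1000000 in
lemma flip_exists {a b c d : V} (hf1 : ({a,b,c} : Finset V) ∈ T.faces)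
    (hf2 : ({a,b,d} : Finset V) ∈ T.faces) (hcd : c ≠ d)
    (hnadj : ¬ T.graph.Adj c d) :
    ∃ T' : Triangulation V, T.FlipData T' a b c d := by
  have hmemnew1 : ({a,c,d} : Finset V) ∈ T.flipFaces a b c d := by
    rw [T.flip_mem]; left; rfl
  have houter_def : ∃ out : Finset V, out ∈ T.flipFaces a b c d ∧
      ((T.outer ≠ {a,b,c} ∧ T.outer ≠ {a,b,d}) → out = T.outer) ∧
      ((T.outer = {a,b,c} ∨ T.outer = {a,b,d}) → out = {a,c,d} ∨ out = {b,c,d}) := by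
    by_cases h : T.outer = ({a,b,c} : Finset V) ∨ T.outer = ({a,b,d} : Finset V)
    · exact ⟨{a,c,d}, hmemnew1, fun hcon => absurd h (not_or.mpr hcon), fun _ => Or.inl rfl⟩
    · push_neg at h
      refine ⟨T.outer, ?_, fun _ => rfl, fun hcon => absurd hcon (not_or.mpr h)⟩
      rw [T.flip_mem]; right; right; exact ⟨T.outer_mem, h.1, h.2⟩
  obtain ⟨out, hout_mem, hout1, hout2⟩ := houter_def
  exact ⟨⟨T.flipFaces a b c d, out, hout_mem, T.flip_card_eq hf1 hf2 hcd hnadj,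
    T.flip_two_faces hf1 hf2 hcd hnadj, T.flip_covers hf1 hf2,
    T.flip_euler hf1 hf2 hcd hnadj, T.flip_face_connected hf1 hf2⟩,
    hf1, hf2, hcd, hnadj, rfl, hout1, hout2⟩

/-- A flip preserves all adjacencies except possibly the flipped edge itself. -/
lemma flip_preserve {T' : Triangulation V} {a b c d : V}
    (hfd : T.FlipData T' a b c d) {x y : V} (hxy : T.graph.Adj x y)
    (hne : ({x,y} : Finset V) ≠ {a,b}) : T'.graph.Adj x y := by
  obtain ⟨hf1, hf2, hcd, hnadj, hfaces, -, -⟩ := hfd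
  obtain ⟨hab, hac, hbc, had, hbd, -, -, -, -⟩ := T.flip_distinct hf1 hf2 hcd hnadj
  obtain ⟨hxyne, f, hf, hxf, hyf⟩ := hxy
  have hmem' : ∀ g : Finset V, (g = {a,c,d} ∨ g = {b,c,d} ∨
      (g ∈ T.faces ∧ g ≠ {a,b,c} ∧ g ≠ {a,b,d})) → g ∈ T'.faces := by
    intro g hg
    rw [hfaces]
    simp only [Finset.mem_insert, Finset.mem_sdiff, Finset.mem_singleton]
    tauto
  have hpair_sub : ({x,y} : Finset V) ⊆ f := by
    intro s hs; simp only [Finset.mem_insert, Finset.mem_singleton] at hs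
    rcases hs with rfl|rfl <;> assumption
  by_cases h1 : f = ({a,b,c} : Finset V)
  · rw [h1] at hpair_sub
    rcases pair_sub_tri (Finset.card_pair hxyne) hpair_sub with h|h|h
    · exact absurd h hne
    · -- {x,y} = {a,c} ⊆ {a,c,d}
      refine ⟨hxyne, {a,c,d}, hmem' _ (Or.inl rfl), ?_, ?_⟩
      · have : x ∈ ({a,c} : Finset V) := h ▸ (by simp : x ∈ ({x,y} : Finset V))
        simp only [Finset.mem_insert, Finset.mem_singleton] at this ⊢; tauto
      · have : y ∈ ({a,c} : Finset V) := h ▸ (by simp : y ∈ ({x,y} : Finset V))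
        simp only [Finset.mem_insert, Finset.mem_singleton] at this ⊢; tauto
    · refine ⟨hxyne, {b,c,d}, hmem' _ (Or.inr (Or.inl rfl)), ?_, ?_⟩
      · have : x ∈ ({b,c} : Finset V) := h ▸ (by simp : x ∈ ({x,y} : Finset V))
        simp only [Finset.mem_insert, Finset.mem_singleton] at this ⊢; tauto
      · have : y ∈ ({b,c} : Finset V) := h ▸ (by simp : y ∈ ({x,y} : Finset V))
        simp only [Finset.mem_insert, Finset.mem_singleton] at this ⊢; tauto
  · by_cases h2 : f = ({a,b,d} : Finset V)
    · rw [h2] at hpair_sub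
      rcases pair_sub_tri (Finset.card_pair hxyne) hpair_sub with h|h|h
      · exact absurd h hne
      · refine ⟨hxyne, {a,c,d}, hmem' _ (Or.inl rfl), ?_, ?_⟩
        · have : x ∈ ({a,d} : Finset V) := h ▸ (by simp : x ∈ ({x,y} : Finset V))
          simp only [Finset.mem_insert, Finset.mem_singleton] at this ⊢; tauto
        · have : y ∈ ({a,d} : Finset V) := h ▸ (by simp : y ∈ ({x,y} : Finset V))
          simp only [Finset.mem_insert, Finset.mem_singleton] at this ⊢; tauto
      · refine ⟨hxyne, {b,c,d}, hmem' _ (Or.inr (Or.inl rfl)), ?_, ?_⟩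
        · have : x ∈ ({b,d} : Finset V) := h ▸ (by simp : x ∈ ({x,y} : Finset V))
          simp only [Finset.mem_insert, Finset.mem_singleton] at this ⊢; tauto
        · have : y ∈ ({b,d} : Finset V) := h ▸ (by simp : y ∈ ({x,y} : Finset V))
          simp only [Finset.mem_insert, Finset.mem_singleton] at this ⊢; tauto
    · exact ⟨hxyne, f, hmem' _ (Or.inr (Or.inr ⟨hf, h1, h2⟩)), hxf, hyf⟩

/-- After a flip, the new edge `{c,d}` is present. -/
lemma flip_new_adj {T' : Triangulation V} {a b c d : V}
    (hfd : T.FlipData T' a b c d) : T'.graph.Adj c d := by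
  obtain ⟨-, -, hcd, -, hfaces, -, -⟩ := hfd
  refine ⟨hcd, {a,c,d}, ?_, by simp, by simp⟩
  rw [hfaces]
  simp

lemma face_p213 {a b c : V} (h : ({a,b,c} : Finset V) ∈ T.faces) :
    ({b,a,c} : Finset V) ∈ T.faces := by rw [tperm]; exact h
lemma face_p132 {a b c : V} (h : ({a,b,c} : Finset V) ∈ T.faces) :
    ({a,c,b} : Finset V) ∈ T.faces := by rw [tperm']; exact h
lemma face_p231 {a b c : V} (h : ({a,b,c} : Finset V) ∈ T.faces) :
    ({b,c,a} : Finset V) ∈ T.faces := by rw [tperm'']; exact h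
lemma face_p312 {a b c : V} (h : ({a,b,c} : Finset V) ∈ T.faces) :
    ({c,a,b} : Finset V) ∈ T.faces := by rw [tperm, tperm']; exact h
lemma face_p321 {a b c : V} (h : ({a,b,c} : Finset V) ∈ T.faces) :
    ({c,b,a} : Finset V) ∈ T.faces := by rw [tperm'', tperm']; exact h

lemma pair_ne_of_not_mem {x y v w : V} (h1 : v ≠ x) (h2 : v ≠ y) :
    ({x,y} : Finset V) ≠ {v,w} := by
  intro h
  have hm : v ∈ ({x,y} : Finset V) := by rw [h]; simp
  simp only [Finset.mem_insert, Finset.mem_singleton] at hm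
  rcases hm with h'|h'
  · exact h1 h'
  · exact h2 h'

lemma pair_ne_snd {v u w : V} (hu : u ≠ w) (huv : u ≠ v) :
    ({v,u} : Finset V) ≠ {v,w} := by
  intro h
  have hm : u ∈ ({v,w} : Finset V) := by rw [← h]; simp
  simp only [Finset.mem_insert, Finset.mem_singleton] at hm
  rcases hm with h'|h'
  · exact huv h'
  · exact hu h'

set_option maxHeartbeats 1000000 in
/-- Step A: under total non-flippability (except the edge `{v,w}`), no neighbour
of `v` other than `w` can have degree 5. -/
lemma stepA (hn : 13 ≤ Fintype.card V) (h4 : T.FourConnected) {v w : V}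
    (hall45 : ∀ u, T.graph.Adj v u → T.graph.degree u = 4 ∨ T.graph.degree u = 5)
    (hno : ∀ a b c d, ({a,b} : Finset V) ≠ {v,w} → ({a,b,c} : Finset V) ∈ T.faces →
      ({a,b,d} : Finset V) ∈ T.faces → c ≠ d → T.graph.Adj c d) :
    ∀ u, T.graph.Adj v u → u ≠ w → T.graph.degree u ≠ 5 := by
  intro u hAdj hune hdeg5u
  obtain ⟨p, hpv, hpu, hfp⟩ := T.adj_face hAdj
  obtain ⟨q, hqp, hqv, hqu, hfq, hexvu⟩ := T.edge_faces hfp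
  have huv : u ≠ v := hAdj.ne'
  have hApq : T.graph.Adj p q :=
    hno v u p q (pair_ne_snd hune huv) hfp hfq (Ne.symm hqp)
  obtain ⟨t1, t2, ht1u, ht1v, ht1p, ht1q, ht2u, ht2v, ht2p, ht2q, ht12,
      hNu, hfuqt1, hfut1t2, hfut2p, hexuv, hexup, hexuq, hexut1, hexut2⟩ :=
    T.link5 hdeg5u (T.face_p213 hfp) (T.face_p213 hfq) (Ne.symm hqp)
  have hAvt1 : T.graph.Adj v t1 :=
    hno u q v t1 (pair_ne_of_not_mem huv.symm (Ne.symm hqv)) (T.face_p231 hfq)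
      hfuqt1 (Ne.symm ht1v)
  have hAvt2 : T.graph.Adj v t2 :=
    hno u p v t2 (pair_ne_of_not_mem huv.symm (Ne.symm hpv)) (T.face_p231 hfp)
      (T.face_p132 hfut2p) (Ne.symm ht2v)
  have hAqt2 : T.graph.Adj q t2 :=
    hno u t1 q t2 (pair_ne_of_not_mem huv.symm ht1v.symm) (T.face_p132 hfuqt1)
      hfut1t2 (Ne.symm ht2q)
  have hApt1 : T.graph.Adj t1 p :=
    hno u t2 t1 p (pair_ne_of_not_mem huv.symm ht2v.symm) (T.face_p132 hfut1t2)
      hfut2p ht1p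
  -- full neighbourhoods of t1 and t2
  have hdegt1 : T.graph.degree t1 ≤ 5 := by
    rcases hall45 t1 hAvt1 with h|h <;> omega
  have hdegt2 : T.graph.degree t2 ≤ 5 := by
    rcases hall45 t2 hAvt2 with h|h <;> omega
  have hNt1 : T.graph.neighborFinset t1 = {v,u,q,t2,p} := by
    apply T.nbr_eq_of_card
    · intro s hs
      simp only [Finset.mem_insert, Finset.mem_singleton] at hs
      rw [T.mem_nbr]
      rcases hs with rfl|rfl|rfl|rfl|rfl
      · exact hAvt1.symm
      · exact (T.face_adj' hfuqt1).symm
      · exact (T.face_adj'' hfuqt1).symm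
      · exact T.face_adj'' hfut1t2
      · exact hApt1
    · refine le_trans hdegt1 (le_of_eq ?_)
      rw [Finset.card_insert_of_notMem (by simp [huv.symm, Ne.symm hqv, ht2v.symm, Ne.symm hpv]),
        Finset.card_insert_of_notMem (by simp [Ne.symm hqu, ht2u.symm, Ne.symm hpu]),
        Finset.card_insert_of_notMem (by simp [ht2q.symm, hqp]),
        Finset.card_insert_of_notMem (by simp [ht2p]), Finset.card_singleton]
  have hNt2 : T.graph.neighborFinset t2 = {v,u,p,t1,q} := by
    apply T.nbr_eq_of_card
    · intro s hs
      simp only [Finset.mem_insert, Finset.mem_singleton] at hs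
      rw [T.mem_nbr]
      rcases hs with rfl|rfl|rfl|rfl|rfl
      · exact hAvt2.symm
      · exact (T.face_adj' hfut1t2).symm
      · exact T.face_adj'' hfut2p
      · exact (T.face_adj'' hfut1t2).symm
      · exact hAqt2.symm
    · refine le_trans hdegt2 (le_of_eq ?_)
      rw [Finset.card_insert_of_notMem (by simp [huv.symm, Ne.symm hpv, ht1v.symm, Ne.symm hqv]),
        Finset.card_insert_of_notMem (by simp [Ne.symm hpu, ht1u.symm, Ne.symm hqu]),
        Finset.card_insert_of_notMem (by simp [ht1p.symm, Ne.symm hqp]),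
        Finset.card_insert_of_notMem (by simp [ht1q]), Finset.card_singleton]
  -- separating triangle {v,p,q} around {u,t1,t2}
  refine T.sep_contra hn h4 (T.face_adj' hfp) (T.face_adj' hfq) hApq
    ({u,t1,t2} : Finset V) ⟨u, by simp⟩ ?_ ?_ ?_
  · intro s hs
    simp only [Finset.mem_insert, Finset.mem_singleton] at hs
    rcases hs with rfl|rfl|rfl
    · exact ⟨huv, Ne.symm hpu, Ne.symm hqu⟩
    · exact ⟨ht1v, ht1p, ht1q⟩
    · exact ⟨ht2v, ht2p, ht2q⟩
  · intro s hs y hy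
    simp only [Finset.mem_insert, Finset.mem_singleton] at hs
    have hyN := (T.mem_nbr).mpr hy
    rcases hs with rfl|rfl|rfl
    · rw [hNu] at hyN
      simp only [Finset.mem_insert, Finset.mem_singleton] at hyN
      rcases hyN with rfl|rfl|rfl|rfl|rfl
      · right; left; rfl
      · right; right; left; rfl
      · right; right; right; rfl
      · left; simp
      · left; simp
    · rw [hNt1] at hyN
      simp only [Finset.mem_insert, Finset.mem_singleton] at hyN
      rcases hyN with rfl|rfl|rfl|rfl|rfl
      · right; left; rfl
      · left; simp
      · right; right; right; rfl
      · left; simp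
      · right; right; left; rfl
    · rw [hNt2] at hyN
      simp only [Finset.mem_insert, Finset.mem_singleton] at hyN
      rcases hyN with rfl|rfl|rfl|rfl|rfl
      · right; left; rfl
      · left; simp
      · right; right; left; rfl
      · left; simp
      · right; right; right; rfl
  · have hc : ({u,t1,t2} : Finset V).card ≤ 3 := by
      refine le_trans (Finset.card_insert_le _ _) ?_
      have := Finset.card_insert_le t1 ({t2} : Finset V)
      simp only [Finset.card_singleton] at this
      omega
    omega

set_option maxHeartbeats 1000000 in
/-- Step B: under total non-flippability (except `{v,w}`), every degree-4
neighbour of `v` other than `w` is adjacent to `w`. -/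
lemma stepB (hn : 13 ≤ Fintype.card V) (h4 : T.FourConnected) {v w : V}
    (hall45 : ∀ u, T.graph.Adj v u → T.graph.degree u = 4 ∨ T.graph.degree u = 5)
    (hno : ∀ a b c d, ({a,b} : Finset V) ≠ {v,w} → ({a,b,c} : Finset V) ∈ T.faces →
      ({a,b,d} : Finset V) ∈ T.faces → c ≠ d → T.graph.Adj c d) :
    ∀ u, T.graph.Adj v u → u ≠ w → T.graph.degree u = 4 → T.graph.Adj u w := by
  intro u hAdj hune hdeg4u
  obtain ⟨p, hpv, hpu, hfp⟩ := T.adj_face hAdj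
  obtain ⟨q, hqp, hqv, hqu, hfq, hexvu⟩ := T.edge_faces hfp
  have huv : u ≠ v := hAdj.ne'
  have hApq : T.graph.Adj p q :=
    hno v u p q (pair_ne_snd hune huv) hfp hfq (Ne.symm hqp)
  obtain ⟨y, hyu, hyv, hyp, hyq, hNu, hfupy, hfuqy, hexuv, hexup, hexuq⟩ :=
    T.link4 hdeg4u (T.face_p213 hfp) (T.face_p213 hfq) (Ne.symm hqp)
  have hAvy : T.graph.Adj v y :=
    hno u p v y (pair_ne_of_not_mem huv.symm (Ne.symm hpv)) (T.face_p231 hfp)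
      hfupy (Ne.symm hyv)
  by_cases hyw : y = w
  · exact hyw ▸ (T.face_adj' hfupy)
  exfalso
  have hdy : T.graph.degree y = 4 :=
    (hall45 y hAvy).resolve_right (T.stepA hn h4 hall45 hno y hAvy hyw)
  obtain ⟨m, hmy, hmu, hmp, hmq, hNy, hfypm, hfyqm, hexyu, hexyp, hexyq⟩ :=
    T.link4 hdy (T.face_p312 hfupy) (T.face_p312 hfuqy) (Ne.symm hqp)
  -- the fourth neighbour of y is v
  have hmv : m = v := by
    have hvN : v ∈ T.graph.neighborFinset y := (T.mem_nbr).mpr hAvy.symm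
    rw [hNy] at hvN
    simp only [Finset.mem_insert, Finset.mem_singleton] at hvN
    rcases hvN with h|h|h|h
    · exact absurd h.symm huv
    · exact absurd h.symm hpv
    · exact absurd h.symm hqv
    · exact h.symm
  rw [hmv] at hfypm hfyqm hexyp hexyq
  -- the killing configuration
  have hkill : ∀ z z' : V, z ≠ v → z ≠ u → z ≠ y → z' ≠ u → z' ≠ v →
      T.graph.Adj z z' → T.graph.degree z = 4 →
      ({v,u,z} : Finset V) ∈ T.faces → ({u,z,y} : Finset V) ∈ T.faces →
      ({u,z',y} : Finset V) ∈ T.faces → ({y,v,z'} : Finset V) ∈ T.faces → False := by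
    intro z z' hzv hzu hzy hz'u hz'v hAzz' hdz hf_vuz hf_uzy hf_uz'y hf_yvz'
    obtain ⟨r, hrz, hru, hrv, hry, hNz, hfzvr, hfzyr, hexzu, hexzv, hexzy⟩ :=
      T.link4 hdz (T.face_p321 hf_vuz) (T.face_p213 hf_uzy) (Ne.symm hyv)
    have hz'N : z' ∈ T.graph.neighborFinset z := (T.mem_nbr).mpr hAzz'
    rw [hNz] at hz'N
    simp only [Finset.mem_insert, Finset.mem_singleton] at hz'N
    have hz'r : z' = r := by
      rcases hz'N with h|h|h|h
      · exact absurd h hz'u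
      · exact absurd h hz'v
      · exact absurd h (by
          intro hcon
          -- z' = y : but {u,z',y} is a face of card 3
          have := (T.tri_ne hf_uz'y).2.2
          exact this hcon)
      · exact h
    rw [← hz'r] at hfzyr
    -- three faces on the edge (y,z')
    obtain ⟨o, hou, hoy, hoz', hfo, hexo⟩ := T.edge_faces (T.face_p321 hf_uz'y)
    have hov : o = v := by
      rcases hexo v (T.face_p132 hf_yvz') with h|h
      · exact absurd h huv.symm
      · exact h.symm
    rcases hexo z (T.face_p231 hfzyr) with h|h
    · exact hzu h
    · rw [hov] at h
      exact hzv h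
  -- p = w and q = w, contradiction
  have hAvp : T.graph.Adj v p := T.face_adj' hfp
  have hAvq : T.graph.Adj v q := T.face_adj' hfq
  have hpw : p = w := by
    by_contra hpw'
    have hdp : T.graph.degree p = 4 :=
      (hall45 p hAvp).resolve_right (T.stepA hn h4 hall45 hno p hAvp hpw')
    exact hkill p q hpv hpu (Ne.symm hyp) hqu hqv hApq hdp hfp hfupy hfuqy
      (T.face_p132 hfyqm)
  have hqw : q = w := by
    by_contra hqw'
    have hdq : T.graph.degree q = 4 :=
      (hall45 q hAvq).resolve_right (T.stepA hn h4 hall45 hno q hAvq hqw')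
    exact hkill q p hqv hqu (Ne.symm hyq) hpu hpv hApq.symm hdq hfq hfuqy hfupy
      (T.face_p132 hfypm)
  exact hqp (hqw.trans hpw.symm)

set_option maxHeartbeats 1000000 in
/-- If `v` has a degree-5 neighbour `w`, there is a flippable edge other than `{v,w}`. -/
lemma flippable_of_deg5 (hn : 13 ≤ Fintype.card V) (h4 : T.FourConnected) {v w : V}
    (hv : 6 ≤ T.graph.degree v)
    (hall45 : ∀ u, T.graph.Adj v u → T.graph.degree u = 4 ∨ T.graph.degree u = 5)
    (hvw : T.graph.Adj v w) (hw5 : T.graph.degree w = 5) :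
    ∃ a b c d, ({a,b} : Finset V) ≠ {v,w} ∧ ({a,b,c} : Finset V) ∈ T.faces ∧
      ({a,b,d} : Finset V) ∈ T.faces ∧ c ≠ d ∧ ¬ T.graph.Adj c d := by
  by_contra hno
  push_neg at hno
  have hstep : ∀ u, T.graph.Adj v u → u ≠ w → T.graph.Adj u w := by
    intro u hu hune
    rcases hall45 u hu with h|h
    · exact T.stepB hn h4 hall45 hno u hu hune h
    · exact absurd h (T.stepA hn h4 hall45 hno u hu hune)
  have hsub : insert v ((T.graph.neighborFinset v).erase w) ⊆
      T.graph.neighborFinset w := by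
    intro s hs
    simp only [Finset.mem_insert, Finset.mem_erase] at hs
    rw [T.mem_nbr]
    rcases hs with rfl|⟨hsw, hsN⟩
    · exact hvw.symm
    · exact (hstep s ((T.mem_nbr).mp hsN) hsw).symm
  have hvNotin : v ∉ (T.graph.neighborFinset v).erase w := by
    intro h
    exact T.graph.irrefl ((T.mem_nbr).mp (Finset.mem_erase.mp h).2)
  have h1 : ((T.graph.neighborFinset v).erase w).card = T.graph.degree v - 1 := by
    rw [Finset.card_erase_of_mem ((T.mem_nbr).mpr hvw), ← T.deg_card]
  have h2 : (insert v ((T.graph.neighborFinset v).erase w)).card =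
      T.graph.degree v - 1 + 1 := by
    rw [Finset.card_insert_of_notMem hvNotin, h1]
  have h3 := Finset.card_le_card hsub
  rw [h2, ← T.deg_card, hw5] at h3
  omega

set_option maxHeartbeats 1000000 in
/-- If all neighbours of `v` have degree 4, there is a flip configuration giving
`v` a (new) neighbour of degree at least 5. -/
lemma case_all4 (hn : 13 ≤ Fintype.card V) (h4 : T.FourConnected) {v : V}
    (hv : 6 ≤ T.graph.degree v)
    (hall4 : ∀ u, T.graph.Adj v u → T.graph.degree u = 4) :
    ∃ a b y, ({a,b,v} : Finset V) ∈ T.faces ∧ ({a,b,y} : Finset V) ∈ T.faces ∧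
      v ≠ y ∧ ¬ T.graph.Adj v y ∧ 5 ≤ T.graph.degree y := by
  have hNpos : 0 < (T.graph.neighborFinset v).card := by
    rw [← T.deg_card]; omega
  obtain ⟨u₀, hu₀⟩ := Finset.card_pos.mp hNpos
  have hAdj : T.graph.Adj v u₀ := (T.mem_nbr).mp hu₀
  obtain ⟨p, hpv, hpu, hfp⟩ := T.adj_face hAdj
  obtain ⟨q, hqp, hqv, hqu, hfq, hexvu⟩ := T.edge_faces hfp
  have huv : u₀ ≠ v := hAdj.ne'
  obtain ⟨y, hyu, hyv, hyp, hyq, hNu, hfupy, hfuqy, hexuv, hexup, hexuq⟩ :=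
    T.link4 (hall4 u₀ hAdj) (T.face_p213 hfp) (T.face_p213 hfq) (Ne.symm hqp)
  -- claim 1 : v and y are not adjacent
  have claim1 : ¬ T.graph.Adj v y := by
    intro hAvy
    obtain ⟨m, hmy, hmu, hmp, hmq, hNy, hfypm, hfyqm, hexyu, hexyp, hexyq⟩ :=
      T.link4 (hall4 y hAvy) (T.face_p312 hfupy) (T.face_p312 hfuqy) (Ne.symm hqp)
    have hmv : m = v := by
      have hvN : v ∈ T.graph.neighborFinset y := (T.mem_nbr).mpr hAvy.symm
      rw [hNy] at hvN
      simp only [Finset.mem_insert, Finset.mem_singleton] at hvN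
      rcases hvN with h|h|h|h
      · exact absurd h.symm huv
      · exact absurd h.symm hpv
      · exact absurd h.symm hqv
      · exact h.symm
    rw [hmv] at hfypm hfyqm
    have hdp : T.graph.degree p = 4 := hall4 p (T.face_adj' hfp)
    obtain ⟨r, hrp, hru, hrv, hry, hNp, hfpvr, hfpyr, hexpu, hexpv, hexpy⟩ :=
      T.link4 hdp (T.face_p321 hfp) (T.face_p213 hfupy) (Ne.symm hyv)
    have hrq : r = q := by
      have hrN : r ∈ T.graph.neighborFinset y :=
        (T.mem_nbr).mpr (T.face_adj'' hfpyr)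
      rw [hNy, hmv] at hrN
      simp only [Finset.mem_insert, Finset.mem_singleton] at hrN
      rcases hrN with h|h|h|h
      · exact absurd h hru
      · exact absurd h hrp
      · exact h
      · exact absurd h hrv
    rw [hrq] at hfpyr
    -- three faces on the edge (y,q)
    obtain ⟨o, hou, hoy, hoq, hfo, hexo⟩ := T.edge_faces (T.face_p321 hfuqy)
    have hov : o = v := by
      rcases hexo v hfyqm with h|h
      · exact absurd h huv.symm
      · exact h.symm
    rcases hexo p (T.face_p231 hfpyr) with h|h
    · exact hpu h
    · rw [hov] at h
      exact hpv h
  -- claim 2 : y has degree at least 5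
  have claim2 : 5 ≤ T.graph.degree y := by
    by_contra h5'
    push_neg at h5'
    have hdy : T.graph.degree y = 4 := by
      have := T.min_degree hn h4 y
      omega
    obtain ⟨m, hmy, hmu, hmp, hmq, hNy, hfypm, hfyqm, hexyu, hexyp, hexyq⟩ :=
      T.link4 hdy (T.face_p312 hfupy) (T.face_p312 hfuqy) (Ne.symm hqp)
    have hmv : m ≠ v := by
      rintro rfl
      exact claim1 (T.face_adj' hfypm).symm
    have hdp : T.graph.degree p = 4 := hall4 p (T.face_adj' hfp)
    obtain ⟨r, hrp, hru, hrv, hry, hNp, hfpvr, hfpyr, hexpu, hexpv, hexpy⟩ :=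
      T.link4 hdp (T.face_p321 hfp) (T.face_p213 hfupy) (Ne.symm hyv)
    have hrqm : r = q ∨ r = m := by
      have hrN : r ∈ T.graph.neighborFinset y :=
        (T.mem_nbr).mpr (T.face_adj'' hfpyr)
      rw [hNy] at hrN
      simp only [Finset.mem_insert, Finset.mem_singleton] at hrN
      rcases hrN with h|h|h|h
      · exact absurd h hru
      · exact absurd h hrp
      · exact Or.inl h
      · exact Or.inr h
    rcases hrqm with hrq|hrm
    · -- r = q gives the face {y,q,p}, contradicting exactness at (y,p)
      rw [hrq] at hfpyr
      rcases hexyp q (T.face_p213 hfpyr) with h|h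
      · exact hqu h
      · exact (Ne.symm hmq) h
    · -- r = m
      rw [hrm] at hfpvr hfpyr
      have hAvm : T.graph.Adj v m := T.face_adj'' hfpvr
      have hdq : T.graph.degree q = 4 := hall4 q (T.face_adj' hfq)
      obtain ⟨r', hr'q, hr'u, hr'v, hr'y, hNq, hfqvr', hfqyr', hexqu, hexqv, hexqy⟩ :=
        T.link4 hdq (T.face_p321 hfq) (T.face_p213 hfuqy) (Ne.symm hyv)
      have hr'm : r' = m := by
        have hr'N : r' ∈ T.graph.neighborFinset y :=
          (T.mem_nbr).mpr (T.face_adj'' hfqyr')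
        rw [hNy] at hr'N
        simp only [Finset.mem_insert, Finset.mem_singleton] at hr'N
        rcases hr'N with h|h|h|h
        · exact absurd h hr'u
        · -- r' = p : face {q,y,p} contradicts exactness at (y,p)
          exfalso
          rw [h] at hfqyr'
          rcases hexyp q (T.face_p231 hfqyr') with h'|h'
          · exact hqu h'
          · exact (Ne.symm hmq) h'
        · exact absurd h hr'q
        · exact h
      rw [hr'm] at hfqvr' hfqyr' hNq
      -- N(m) = {v,p,q,y}
      have hdm : T.graph.degree m = 4 := hall4 m hAvm
      have hNm : T.graph.neighborFinset m = {v,p,q,y} := by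
        apply T.nbr_eq_of_card
        · intro s hs
          simp only [Finset.mem_insert, Finset.mem_singleton] at hs
          rw [T.mem_nbr]
          rcases hs with rfl|rfl|rfl|rfl
          · exact hAvm.symm
          · exact (T.face_adj'' hfypm).symm
          · exact (T.face_adj'' hfyqm).symm
          · exact (T.face_adj' hfypm).symm
        · refine le_of_le_of_eq (le_of_eq hdm) ?_
          rw [Finset.card_insert_of_notMem (by simp [Ne.symm hpv, Ne.symm hqv, Ne.symm hyv]),
            Finset.card_insert_of_notMem (by simp [Ne.symm hqp, Ne.symm hyp]),
            Finset.card_insert_of_notMem (by simp [Ne.symm hyq]), Finset.card_singleton]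
      -- separating triangle {v,p,m} around {u₀,y,q}
      refine T.sep_contra hn h4 (T.face_adj' hfp) hAvm (T.face_adj'' hfypm)
        ({u₀,y,q} : Finset V) ⟨u₀, by simp⟩ ?_ ?_ ?_
      · intro s hs
        simp only [Finset.mem_insert, Finset.mem_singleton] at hs
        rcases hs with rfl|rfl|rfl
        · exact ⟨huv, Ne.symm hpu, Ne.symm hmu⟩
        · exact ⟨hyv, hyp, Ne.symm hmy⟩
        · exact ⟨hqv, hqp, Ne.symm hmq⟩
      · intro s hs z hz
        simp only [Finset.mem_insert, Finset.mem_singleton] at hs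
        have hzN := (T.mem_nbr).mpr hz
        rcases hs with rfl|rfl|rfl
        · rw [hNu] at hzN
          simp only [Finset.mem_insert, Finset.mem_singleton] at hzN
          rcases hzN with rfl|rfl|rfl|rfl
          · right; left; rfl
          · right; right; left; rfl
          · left; simp
          · left; simp
        · rw [hNy] at hzN
          simp only [Finset.mem_insert, Finset.mem_singleton] at hzN
          rcases hzN with rfl|rfl|rfl|rfl
          · left; simp
          · right; right; left; rfl
          · left; simp
          · right; right; right; rfl
        · rw [hNq] at hzN
          simp only [Finset.mem_insert, Finset.mem_singleton] at hzN
          rcases hzN with rfl|rfl|rfl|rfl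
          · left; simp
          · right; left; rfl
          · left; simp
          · right; right; right; rfl
      · have hc : ({u₀,y,q} : Finset V).card ≤ 3 := by
          refine le_trans (Finset.card_insert_le _ _) ?_
          have := Finset.card_insert_le y ({q} : Finset V)
          simp only [Finset.card_singleton] at this
          omega
        omega
  exact ⟨u₀, p, y, T.face_p231 hfp, hfupy, Ne.symm hyv, claim1, claim2⟩
end Triangulation

/-- In a 4-connected triangulation on `n ≥ 13` vertices, every vertex
of degree at least 6 either has a neighbour of degree at least 6, or there is a single
flip after which it is adjacent to a vertex that had degree at least 5 before the flip. -/
theorem high_degree_vertex_gets_high_degree_neighbour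
    {V : Type*} [Fintype V] [DecidableEq V] (T : Triangulation V)
    (hn : 13 ≤ Fintype.card V) (h4 : T.FourConnected)
    (v : V) (hv : 6 ≤ T.graph.degree v) :
    (∃ w : V, T.graph.Adj v w ∧ 6 ≤ T.graph.degree w) ∨
    (∃ (T' : Triangulation V) (w : V), T.IsFlip T' ∧ 5 ≤ T.graph.degree w ∧
      T'.graph.Adj v w) := by
  by_cases h6 : ∃ w : V, T.graph.Adj v w ∧ 6 ≤ T.graph.degree w
  · exact Or.inl h6
  · push_neg at h6
    have hall45 : ∀ u, T.graph.Adj v u →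
        T.graph.degree u = 4 ∨ T.graph.degree u = 5 := by
      intro u hu
      have h1 := T.min_degree hn h4 u
      have h2 := h6 u hu
      omega
    right
    by_cases h5 : ∃ w : V, T.graph.Adj v w ∧ T.graph.degree w = 5
    · obtain ⟨w, hvw, hw5⟩ := h5
      obtain ⟨a, b, c, d, hne, hfa, hfb, hcd, hnadj⟩ :=
        T.flippable_of_deg5 hn h4 hv hall45 hvw hw5
      obtain ⟨T', hfd⟩ := T.flip_exists hfa hfb hcd hnadj
      exact ⟨T', w, ⟨a, b, c, d, hfd⟩, le_of_eq hw5.symm,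
        T.flip_preserve hfd hvw (Ne.symm hne)⟩
    · have hall4 : ∀ u, T.graph.Adj v u → T.graph.degree u = 4 := by
        intro u hu
        rcases hall45 u hu with h|h
        · exact h
        · exact absurd ⟨u, hu, h⟩ h5
      obtain ⟨a, b, y, hfv, hfy, hvy, hnadj, hdy⟩ := T.case_all4 hn h4 hv hall4
      obtain ⟨T', hfd⟩ := T.flip_exists hfv hfy hvy hnadj
      exact ⟨T', y, ⟨a, b, v, y, hfd⟩, hdy, T.flip_new_adj hfd⟩
end
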